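/- arXiv:1005.3759 — 2 statements merged into one kernel-verified Lean document; each statement's English description precedes it below -/
import Mathlib

section
/- Let G be a connected signed, colored graph of type (n+1,n+1) satisfying dual equivalence axioms 1 through 5 such that every connected component of the (n,n)-restriction of G is isomorphic to a standard dual equivalence graph, and let φ be a morphism from G to the standard dual equivalence graph G_λ, with λ a partition of n+1. Then the fibers φ^{−1}(T), over the vertices T of G_λ, all have the same cardinality. -/
open scoped Classical

noncomputable section

/-! ### Signed, colored graphs -/

/-- A signed, colored graph of type `(n, N)`: a vertex set `V`, a signature
function `σ : V → {±1}^(N-1)` (encoded as a function `ℕ → ℤ` whose values are `±1`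
for `1 ≤ i ≤ N-1`), and for each `1 < i < n` a set of edges `E_i` (encoded as a
symmetric irreflexive relation). -/
structure SCG (V : Type) (n N : ℕ) where
  sgn : V → ℕ → ℤ
  edge : ℕ → V → V → Prop
  sgn_pm : ∀ v i, 1 ≤ i → i < N → sgn v i = 1 ∨ sgn v i = -1
  edge_symm : ∀ i v w, edge i v w → edge i w v
  edge_ne : ∀ i v w, edge i v w → v ≠ w
  edge_supp : ∀ i v w, edge i v w → 1 < i ∧ i < n

namespace SCG

variable {V W : Type} {n N n' N' : ℕ}

/-- Reachability using edges whose colors lie in `S`. -/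
def ReachS (G : SCG V n N) (S : Set ℕ) (v w : V) : Prop :=
  Relation.ReflTransGen (fun a b => ∃ i ∈ S, G.edge i a b) v w

/-- Reachability using all edges. -/
def Reach (G : SCG V n N) (v w : V) : Prop :=
  Relation.ReflTransGen (fun a b => ∃ i, G.edge i a b) v w

/-- The connected component of `v0`, as a signed colored graph. -/
def component (G : SCG V n N) (v0 : V) : SCG {v : V // G.Reach v0 v} n N where
  sgn v := G.sgn v.1
  edge i v w := G.edge i v.1 w.1
  sgn_pm v := G.sgn_pm v.1
  edge_symm i v w h := G.edge_symm i v.1 w.1 h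
  edge_ne i v w h hvw := G.edge_ne i v.1 w.1 h (congrArg Subtype.val hvw)
  edge_supp i v w h := G.edge_supp i v.1 w.1 h

/-- The `(m, M)`-restriction of a signed colored graph: keep the vertex set,
truncate the signature (i.e. only promise values on `1 ≤ i ≤ M-1`), and
keep only the edges `E_2, …, E_(m-1)`. -/
def restrict (G : SCG V n N) (m M : ℕ) (hm : m ≤ n) (hM : M ≤ N) : SCG V m M where
  sgn := G.sgn
  edge i v w := i < m ∧ G.edge i v w
  sgn_pm v i h1 h2 := G.sgn_pm v i h1 (lt_of_lt_of_le h2 hM)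
  edge_symm i v w h := ⟨h.1, G.edge_symm i v w h.2⟩
  edge_ne i v w h := G.edge_ne i v w h.2
  edge_supp i v w h := ⟨(G.edge_supp i v w h.2).1, h.1⟩

/-- A morphism of signed colored graphs of the same type: preserves all
signature coordinates and all colored edges. -/
def IsMorphism (G : SCG V n N) (H : SCG W n N) (φ : V → W) : Prop :=
  (∀ v i, 1 ≤ i → i < N → H.sgn (φ v) i = G.sgn v i) ∧
  ∀ i v w, G.edge i v w → H.edge i (φ v) (φ w)

/-- Isomorphism of signed colored graphs: a bijective morphism. -/
def Isomorphic (G : SCG V n N) (H : SCG W n N) : Prop :=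
  ∃ φ : V → W, IsMorphism G H φ ∧ Function.Bijective φ

/-- An isomorphism of edge-colored graphs between the connected component of `v0`
in `G` using the colors in `S`, and the connected component of `u0` in `H` using
the colors `r '' S`, matching each color `i ∈ S` with the color `r i`. -/
def ColorIso (G : SCG V n N) (v0 : V) (H : SCG W n' N') (u0 : W)
    (r : ℕ → ℕ) (S : Set ℕ) : Prop :=
  ∃ f : {v : V // G.ReachS S v0 v} → {u : W // H.ReachS (r '' S) u0 u},
    Function.Bijective f ∧ ∀ i ∈ S, ∀ a b, G.edge i a.1 b.1 ↔ H.edge (r i) (f a).1 (f b).1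

/-- Dual equivalence axiom 1. -/
def Ax1 (G : SCG V n N) : Prop :=
  ∀ i, 1 < i → i < n → ∀ w, (G.sgn w (i - 1) = -G.sgn w i ↔ ∃! x, G.edge i w x)

/-- Dual equivalence axiom 2. -/
def Ax2 (G : SCG V n N) : Prop :=
  ∀ i v w, G.edge i v w →
    G.sgn v (i - 1) = -G.sgn w (i - 1) ∧ G.sgn v i = -G.sgn w i ∧
      ∀ h, h + 2 < i ∨ i + 1 < h → G.sgn v h = G.sgn w h

/-- Dual equivalence axiom 3. -/
def Ax3 (G : SCG V n N) : Prop :=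
  ∀ i v w, G.edge i v w →
    (G.sgn v (i - 2) = -G.sgn w (i - 2) → G.sgn v (i - 2) = -G.sgn v (i - 1)) ∧
    (G.sgn v (i + 1) = -G.sgn w (i + 1) → G.sgn v (i + 1) = -G.sgn v i)

/-- Dual equivalence axiom 5. -/
def Ax5 (G : SCG V n N) : Prop :=
  ∀ i j w x y, G.edge i w x → G.edge j x y → i + 3 ≤ j ∨ j + 3 ≤ i →
    ∃ v, G.edge j w v ∧ G.edge i v y

/-- Dual equivalence axiom 6 : any two vertices of a connected component of
`E_2 ∪ ⋯ ∪ E_i` may be joined by a path crossing at most one `E_i` edge. -/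
def Ax6 (G : SCG V n N) : Prop :=
  ∀ i, 1 < i → i < n → ∀ v w : V, G.ReachS (Set.Icc 2 i) v w →
    ∃ u u', G.ReachS (Set.Icc 2 (i - 1)) v u ∧ (u = u' ∨ G.edge i u u') ∧
      G.ReachS (Set.Icc 2 (i - 1)) u' w

end SCG

/-! ### Standard Young tableaux and the standard dual equivalence graph -/

/-- A standard Young tableau of shape `μ`, recorded by the function sending
`k : Fin μ.card` to the cell containing the entry `k+1`.  (Cells are in matrix
coordinates `(row, column)`; entries increase along rows and along columns.) -/
structure SYT (μ : YoungDiagram) where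
  cellOf : Fin μ.card → ℕ × ℕ
  mem_cells : ∀ k, cellOf k ∈ μ.cells
  inj : Function.Injective cellOf
  row_mono : ∀ k l, (cellOf k).1 = (cellOf l).1 → (cellOf k).2 < (cellOf l).2 → k < l
  col_mono : ∀ k l, (cellOf k).2 = (cellOf l).2 → (cellOf k).1 < (cellOf l).1 → k < l

instance (μ : YoungDiagram) : Finite (SYT μ) := by
  apply Finite.of_injective
    (fun T : SYT μ => fun k => (⟨T.cellOf k, T.mem_cells k⟩ : {x : ℕ × ℕ // x ∈ μ.cells}))
  intro T U h
  cases T; cases U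
  simp only [SYT.mk.injEq]
  funext k
  exact congrArg Subtype.val (congrFun h k)

/-- The content of a cell: `column - row`. -/
def cellContent (x : ℕ × ℕ) : ℤ := (x.2 : ℤ) - (x.1 : ℤ)

/-- `x` comes before `y` in the content reading order: smaller content first,
and within a diagonal, southwest to northeast. -/
def readBefore (x y : ℕ × ℕ) : Prop :=
  cellContent x < cellContent y ∨ (cellContent x = cellContent y ∧ x.2 < y.2)

/-- The cell containing the entry `a` (for `1 ≤ a ≤ μ.card`). -/
def SYT.cell {μ : YoungDiagram} (T : SYT μ) (a : ℕ) : ℕ × ℕ :=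
  if h : 1 ≤ a ∧ a ≤ μ.card then T.cellOf ⟨a - 1, by omega⟩ else (0, 0)

/-- The descent signature of a standard tableau: `σ(T)_i = +1` iff `i` appears
before `i+1` in the content reading word. -/
def sytSgn {μ : YoungDiagram} (T : SYT μ) : ℕ → ℤ := fun i =>
  if readBefore (T.cell i) (T.cell (i + 1)) then 1 else -1

/-- The entry `b` lies between the entries `a` and `c` in the content reading
word of `T`. -/
def posBetween {μ : YoungDiagram} (T : SYT μ) (a b c : ℕ) : Prop :=
  (readBefore (T.cell a) (T.cell b) ∧ readBefore (T.cell b) (T.cell c)) ∨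
  (readBefore (T.cell c) (T.cell b) ∧ readBefore (T.cell b) (T.cell a))

/-- `U` is obtained from `T` by exchanging the cells of the entries `a`, `b`. -/
def swapEq {μ : YoungDiagram} (T U : SYT μ) (a b : ℕ) : Prop :=
  ∀ x, 1 ≤ x → x ≤ μ.card →
    U.cell x = if x = a then T.cell b else if x = b then T.cell a else T.cell x

/-- The elementary dual equivalence for `i-1, i, i+1`: the middle letter (in
reading order) of `i-1, i, i+1` is not `i`, and the outer two letters are
exchanged. -/
def stdEdgeCore (μ : YoungDiagram) (i : ℕ) (T U : SYT μ) : Prop :=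
  1 < i ∧ i < μ.card ∧
    ((posBetween T i (i + 1) (i - 1) ∧ swapEq T U (i - 1) i) ∨
     (posBetween T i (i - 1) (i + 1) ∧ swapEq T U i (i + 1)))

/-- The standard dual equivalence graph `G_μ` for a partition `μ` of `n`. -/
def stdDEG (n : ℕ) (μ : YoungDiagram) (hcard : μ.card = n) : SCG (SYT μ) n n where
  sgn T := sytSgn T
  edge i T U := T ≠ U ∧ (stdEdgeCore μ i T U ∨ stdEdgeCore μ i U T)
  sgn_pm := by
    intro v i _ _
    simp only [sytSgn]
    split
    · exact Or.inl rfl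
    · exact Or.inr rfl
  edge_symm := by
    rintro i T U ⟨h1, h2⟩
    exact ⟨h1.symm, h2.symm⟩
  edge_ne := fun i T U h => h.1
  edge_supp := by
    rintro i T U ⟨h1, h2 | h2⟩ <;> exact ⟨h2.1, hcard ▸ h2.2.1⟩

namespace SCG

variable {V W : Type} {n N : ℕ}

/-- Dual equivalence axiom 4 : every connected component of `E_(i-1) ∪ E_i` is
isomorphic, as an edge-colored graph, to a connected component of the
restriction to colors `{2,3}` (relabelled `i-1, i`) of a standard dual
equivalence graph `G_μ` with `μ ⊢ 4`; and similarly for three colors and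
partitions of `5`. -/
def Ax4 (G : SCG V n N) : Prop :=
  (∀ i, 2 < i → i < n → ∀ v0 : V, ∃ (μ : YoungDiagram) (h4 : μ.card = 4) (T0 : SYT μ),
      G.ColorIso v0 (stdDEG 4 μ h4) T0 (· + 3 - i) {i - 1, i}) ∧
  (∀ i, 3 < i → i < n → ∀ v0 : V, ∃ (μ : YoungDiagram) (h5 : μ.card = 5) (T0 : SYT μ),
      G.ColorIso v0 (stdDEG 5 μ h5) T0 (· + 4 - i) {i - 2, i - 1, i})

/-- A dual equivalence graph of type `(n,N)`. -/
def IsDEG (G : SCG V n N) : Prop :=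
  n ≤ N ∧ G.Ax1 ∧ G.Ax2 ∧ G.Ax3 ∧ G.Ax4 ∧ G.Ax5 ∧ G.Ax6

end SCG

/-! ### Quasisymmetric functions and Schur functions -/

/-- Gessel's fundamental quasisymmetric function `Q_σ` of degree `n`, for a
signature `s` (with `s j` the sign `σ_j` for `1 ≤ j ≤ n-1`), as a formal power
series in the variables `x_0, x_1, x_2, …` (representing `x_1, x_2, …`).
It is the sum of `x_(i_1) ⋯ x_(i_n)` over weakly increasing sequences
`i_1 ≤ ⋯ ≤ i_n` such that `i_j = i_(j+1)` forces `σ_j = +1`. -/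
def Qfun (R : Type) [CommRing R] (n : ℕ) (s : ℕ → ℤ) : MvPowerSeries ℕ R := fun d =>
  ((Set.ncard {f : Fin n → ℕ | Monotone f ∧
      (∀ (j : ℕ) (hj : j < n), 1 ≤ j → f ⟨j - 1, by omega⟩ = f ⟨j, hj⟩ → s j = 1) ∧
      ∑ k : Fin n, Finsupp.single (f k) 1 = d} : ℕ) : R)

/-- The Schur function `s_μ = Σ_(T ∈ SYT(μ)) Q_(σ(T))`. -/
def schurPS (R : Type) [CommRing R] (μ : YoungDiagram) : MvPowerSeries ℕ R :=
  ∑ᶠ T : SYT μ, Qfun R μ.card (sytSgn T)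

/-- Symmetry of a formal power series in `x_0, x_1, …`: invariance of the
coefficients under every permutation of the variables. -/
def MvPSSymmetric {R : Type} [CommRing R] (F : MvPowerSeries ℕ R) : Prop :=
  ∀ (g : Equiv.Perm ℕ) (d : ℕ →₀ ℕ),
    MvPowerSeries.coeff (R := R) (Finsupp.equivMapDomain g d) F = MvPowerSeries.coeff (R := R) d F

/-- Schur positivity: `F` is a nonnegative integer combination of Schur functions. -/
def SchurPositive (F : MvPowerSeries ℕ ℤ) : Prop :=
  ∃ a : YoungDiagram → ℕ, (Function.support a).Finite ∧
    F = ∑ᶠ μ : YoungDiagram, (a μ : ℤ) • schurPS ℤ μ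

/-! ### Words, ribbon words and the LLT graphs -/

/-- A standard word of length `n`: a bijection from positions `1,…,n` to
letters `1,…,n` (and `0` outside this range). -/
def IsStdWord (n : ℕ) (w : ℕ → ℕ) : Prop :=
  Set.BijOn w (Set.Icc 1 n) (Set.Icc 1 n) ∧ ∀ p, p ∉ Set.Icc 1 n → w p = 0

/-- A word of positive integers of length `n`. -/
def IsPosWord (n : ℕ) (w : ℕ → ℕ) : Prop :=
  (∀ p ∈ Set.Icc 1 n, 1 ≤ w p) ∧ ∀ p, p ∉ Set.Icc 1 n → w p = 0

/-- The `k`-descent set of the pair `(w, c)` (as a set of pairs of positions). -/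
def DesK (k n : ℕ) (w : ℕ → ℕ) (c : ℕ → ℤ) : Set (ℕ × ℕ) :=
  {pq : ℕ × ℕ | pq.1 ∈ Set.Icc 1 n ∧ pq.2 ∈ Set.Icc 1 n ∧ w pq.2 < w pq.1 ∧
    c pq.2 - c pq.1 = (k : ℤ)}

/-- The set of `k`-inversions of the pair `(w, c)`. -/
def InvK (k n : ℕ) (w : ℕ → ℕ) (c : ℕ → ℤ) : Set (ℕ × ℕ) :=
  {pq : ℕ × ℕ | pq.1 ∈ Set.Icc 1 n ∧ pq.2 ∈ Set.Icc 1 n ∧ w pq.2 < w pq.1 ∧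
    0 < c pq.2 - c pq.1 ∧ c pq.2 - c pq.1 < (k : ℤ)}

/-- The `k`-inversion number of `(w, c)`. -/
def invK (k n : ℕ) (w : ℕ → ℕ) (c : ℕ → ℤ) : ℕ := (InvK k n w c).ncard

/-- The pair `(w, c)` is a `k`-ribbon word. -/
def IsRibbonWord (k n : ℕ) (w : ℕ → ℕ) (c : ℕ → ℤ) : Prop :=
  ∀ p, 1 ≤ p → p + 1 ≤ n → c p = c (p + 1) →
    (∃ h, h ∈ Set.Icc 1 n ∧ c h = c p - (k : ℤ) ∧ w p < w h ∧ w h ≤ w (p + 1)) ∧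
    (∃ j, j ∈ Set.Icc 1 n ∧ c j = c p + (k : ℤ) ∧ w p ≤ w j ∧ w j < w (p + 1))

/-- The letter `a` appears to the left of the letter `b` in the word `w`. -/
def leftOf (n : ℕ) (w : ℕ → ℕ) (a b : ℕ) : Prop :=
  ∃ p q, p ∈ Set.Icc 1 n ∧ q ∈ Set.Icc 1 n ∧ p < q ∧ w p = a ∧ w q = b

/-- The descent signature of a word: `σ(w)_i = +1` iff `i` is left of `i+1`. -/
def wordSgn (n : ℕ) (w : ℕ → ℕ) : ℕ → ℤ := fun i =>
  if leftOf n w i (i + 1) then 1 else -1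

/-- The position of the letter `ℓ` in the word `w`. -/
def posOf (n : ℕ) (w : ℕ → ℕ) (ℓ : ℕ) : ℕ := sInf {p | p ∈ Set.Icc 1 n ∧ w p = ℓ}

/-- The involution `D_i^(k)` on standard words: if `i` lies between `i-1` and
`i+1` do nothing; otherwise apply `d_i` (switch the outer two of the letters
`i-1, i, i+1`) when `dist(i-1,i,i+1) > k`, and `d̃_i` (cycle the three letters
among their positions) when `dist(i-1,i,i+1) ≤ k`. -/
def Dk (k n : ℕ) (c : ℕ → ℤ) (i : ℕ) (w : ℕ → ℕ) : ℕ → ℕ :=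
  let p := posOf n w (i - 1)
  let q := posOf n w i
  let r := posOf n w (i + 1)
  if (p < q ∧ q < r) ∨ (r < q ∧ q < p) then w
  else
    let s1 := min p (min q r)
    let s3 := max p (max q r)
    let s2 := p + q + r - s1 - s3
    if (k : ℤ) < max |c p - c q| (max |c q - c r| |c p - c r|) then
      fun t => if t = s1 then w s3 else if t = s3 then w s1 else w t
    else if q = s1 then
      fun t => if t = s1 then w s2 else if t = s2 then w s3 else if t = s3 then w s1 else w t
    else
      fun t => if t = s1 then w s3 else if t = s2 then w s1 else if t = s3 then w s2 else w t

/-- The vertex set `V^(k)_(c,D)`: standard `k`-ribbon words with content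
vector `c` and `k`-descent set `D`. -/
def lltV (k n : ℕ) (c : ℕ → ℤ) (D : Set (ℕ × ℕ)) : Type :=
  {w : ℕ → ℕ // IsStdWord n w ∧ IsRibbonWord k n w c ∧ DesK k n w c = D}

instance lltV.finite (k n : ℕ) (c : ℕ → ℤ) (D : Set (ℕ × ℕ)) : Finite (lltV k n c D) := by
  apply Finite.of_injective
    (fun w : lltV k n c D => fun p : Fin (n + 1) => (⟨w.1 p, by
      rcases Classical.em ((p : ℕ) ∈ Set.Icc 1 n) with h | h
      · exact Nat.lt_succ_of_le (w.2.1.1.mapsTo h).2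
      · simp [w.2.1.2 _ h]⟩ : Fin (n + 1)))
  intro a b hab
  apply Subtype.ext
  funext p
  by_cases hp : p ∈ Set.Icc 1 n
  · have hlt : p < n + 1 := Nat.lt_succ_of_le hp.2
    exact congrArg Fin.val (congrFun hab ⟨p, hlt⟩)
  · rw [a.2.1.2 _ hp, b.2.1.2 _ hp]

/-- The signed, colored graph `G^(k)_(c,D)` on standard `k`-ribbon words with
content vector `c` and `k`-descent set `D`, with `i`-edges the pairs
`{w, D_i^(k)(w)}` over vertices `w` admitting an `i`-neighbor. -/
def lltGraph (k n : ℕ) (c : ℕ → ℤ) (D : Set (ℕ × ℕ)) : SCG (lltV k n c D) n n where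
  sgn w := wordSgn n w.1
  edge i v u := 1 < i ∧ i < n ∧ v ≠ u ∧
    ((wordSgn n v.1 (i - 1) = -wordSgn n v.1 i ∧ u.1 = Dk k n c i v.1) ∨
     (wordSgn n u.1 (i - 1) = -wordSgn n u.1 i ∧ v.1 = Dk k n c i u.1))
  sgn_pm := by
    intro v i _ _
    simp only [wordSgn]
    split
    · exact Or.inl rfl
    · exact Or.inr rfl
  edge_symm := by
    rintro i v u ⟨h1, h2, h3, h4⟩
    exact ⟨h1, h2, h3.symm, h4.symm⟩
  edge_ne := fun i v u h => h.2.2.1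
  edge_supp := fun i v u h => ⟨h.1, h.2.1⟩

/-- The descent set of a word. -/
def DesSet (n : ℕ) (w : ℕ → ℕ) : Finset ℕ :=
  (Finset.Icc 1 (n - 1)).filter fun p => w (p + 1) < w p

/-- The (skew) Schur function of the ribbon of size `n` whose descent set is
`E`, via its quasisymmetric expansion. -/
def ribbonSchurGF (n : ℕ) (E : Finset ℕ) : MvPowerSeries ℕ ℤ :=
  ∑ᶠ w : {w : ℕ → ℕ // IsStdWord n w ∧ DesSet n w = E}, Qfun ℤ n (wordSgn n w.1)

/-! ### Tuples of skew tableaux and LLT polynomials -/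

/-- A finite set of cells forming a skew shape `λ/ν`. -/
def IsSkewShape (S : Finset (ℕ × ℕ)) : Prop :=
  ∃ lam nu : YoungDiagram, nu ≤ lam ∧ S = lam.cells \ nu.cells

/-- A semistandard filling of the cell set `S`: positive entries on `S`, zero
elsewhere, weakly increasing along rows and strictly increasing along columns. -/
def SemistdOn (S : Finset (ℕ × ℕ)) (T : ℕ × ℕ → ℕ) : Prop :=
  (∀ x ∈ S, 1 ≤ T x) ∧ (∀ x, x ∉ S → T x = 0) ∧
  (∀ r c1 c2, (r, c1) ∈ S → (r, c2) ∈ S → c1 ≤ c2 → T (r, c1) ≤ T (r, c2)) ∧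
  (∀ r1 r2 cc, (r1, cc) ∈ S → (r2, cc) ∈ S → r1 < r2 → T (r1, cc) < T (r2, cc))

/-- A `k`-tuple of semistandard tableaux of shapes `S 0, …, S (k-1)`. -/
def SemistdTuple {k : ℕ} (S : Fin k → Finset (ℕ × ℕ)) (T : Fin k → ℕ × ℕ → ℕ) : Prop :=
  ∀ i, SemistdOn (S i) (T i)

/-- The shifted content `c̃ = k·c(x) + i` of a cell `x` of the `i`-th shape. -/
def shiftedContent (k : ℕ) (x : Fin k × ℕ × ℕ) : ℤ :=
  (k : ℤ) * cellContent x.2 + (x.1 : ℤ)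

/-- `e` enumerates the cells of the tuple of shapes `S` in content reading
order (increasing shifted content, southwest to northeast on diagonals). -/
def IsCellEnum (k n : ℕ) (S : Fin k → Finset (ℕ × ℕ)) (e : ℕ → Fin k × ℕ × ℕ) : Prop :=
  Set.BijOn e (Set.Icc 1 n) {ix : Fin k × ℕ × ℕ | ix.2 ∈ S ix.1} ∧
  ∀ p q, p ∈ Set.Icc 1 n → q ∈ Set.Icc 1 n → p < q →
    (shiftedContent k (e p) < shiftedContent k (e q) ∨
     (shiftedContent k (e p) = shiftedContent k (e q) ∧ (e p).2.2 < (e q).2.2))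

/-- The content reading word of a tuple `T`, via the enumeration `e`. -/
def readWord (n : ℕ) {k : ℕ} (e : ℕ → Fin k × ℕ × ℕ) (T : Fin k → ℕ × ℕ → ℕ) : ℕ → ℕ :=
  fun p => if p ∈ Set.Icc 1 n then T (e p).1 (e p).2 else 0

/-- The weight of a tuple of tableaux, as an exponent vector (the variable
`x_j` records entries equal to `j+1`). -/
def tupleWeight {k : ℕ} (S : Fin k → Finset (ℕ × ℕ)) (T : Fin k → ℕ × ℕ → ℕ) : ℕ →₀ ℕ :=
  ∑ i : Fin k, ∑ x ∈ S i, Finsupp.single (T i x - 1) 1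

/-- The number of `k`-inversions of a tuple of tableaux. -/
def invkTuple (k : ℕ) (S : Fin k → Finset (ℕ × ℕ)) (T : Fin k → ℕ × ℕ → ℕ) : ℕ :=
  Set.ncard {p : (Fin k × ℕ × ℕ) × (Fin k × ℕ × ℕ) |
    p.1.2 ∈ S p.1.1 ∧ p.2.2 ∈ S p.2.1 ∧
    0 < shiftedContent k p.2 - shiftedContent k p.1 ∧
    shiftedContent k p.2 - shiftedContent k p.1 < (k : ℤ) ∧
    T p.2.1 p.2.2 < T p.1.1 p.1.2}

/-- The LLT polynomial `G̃^(k)_μ(x; q) = Σ_T q^(inv_k(T)) x^T`, as a formal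
power series in `x` with coefficients in `ℤ[q]`. -/
def LLTpoly (k : ℕ) (S : Fin k → Finset (ℕ × ℕ)) : MvPowerSeries ℕ (Polynomial ℤ) :=
  fun d => ∑ᶠ T : {T : Fin k → ℕ × ℕ → ℕ // SemistdTuple S T ∧ tupleWeight S T = d},
    (Polynomial.X : Polynomial ℤ) ^ invkTuple k S T.1

/-- The weight of a word. -/
def wordWeight (n : ℕ) (w : ℕ → ℕ) : ℕ →₀ ℕ :=
  ∑ p ∈ Finset.Icc 1 n, Finsupp.single (w p - 1) 1

/-- The generating function `Σ_((w,c) ∈ WRib_k(c,D)) q^(inv_k(w,c)) x^w` of all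
`k`-ribbon words with content vector `c` and `k`-descent set `D`. -/
def ribbonWordGF (k n : ℕ) (c : ℕ → ℤ) (D : Set (ℕ × ℕ)) : MvPowerSeries ℕ (Polynomial ℤ) :=
  fun d => ∑ᶠ w : {w : ℕ → ℕ // IsPosWord n w ∧ IsRibbonWord k n w c ∧
      DesK k n w c = D ∧ wordWeight n w = d},
    (Polynomial.X : Polynomial ℤ) ^ invK k n w.1 c

/-! ### Packages, types, local Schur positivity, axiom 4' and D graphs -/

namespace SCG

variable {V W : Type} {n N : ℕ}

/-- The `i`-package of a vertex: its connected component using only the edges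
of colors `≤ i-3` or `≥ i+3`. -/
def packReach (G : SCG V n N) (i : ℕ) (v w : V) : Prop :=
  G.ReachS {j | j + 3 ≤ i ∨ i + 3 ≤ j} v w

/-- `w` admits a `j`-neighbor. -/
def Admits (G : SCG V n N) (j : ℕ) (w : V) : Prop := G.sgn w (j - 1) = -G.sgn w j

/-- `w` has `i`-type W. -/
def TypeW (G : SCG V n N) (i : ℕ) (w : V) : Prop :=
  G.Admits (i - 1) w ∧ ∃ x, G.edge (i - 1) w x ∧ G.sgn x i = -G.sgn w i

/-- `w` has `i`-type A. -/
def TypeA (G : SCG V n N) (i : ℕ) (w : V) : Prop :=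
  ¬G.TypeW i w ∧ ¬G.Admits (i - 2) w

/-- `w` has `i`-type B. -/
def TypeB (G : SCG V n N) (i : ℕ) (w : V) : Prop :=
  ¬G.TypeW i w ∧ G.Admits (i - 2) w ∧ ∃ x, G.edge (i - 2) w x ∧
    ((G.Admits (i - 1) w ∧ G.sgn w (i - 1) = -G.sgn x (i - 1)) ∨
     (¬G.Admits (i - 1) w ∧ ∃ z, G.edge (i - 1) x z ∧ G.sgn w i = -G.sgn z i))

/-- `w` has `i`-type C. -/
def TypeC (G : SCG V n N) (i : ℕ) (w : V) : Prop :=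
  ¬G.TypeW i w ∧ G.Admits (i - 2) w ∧ ∃ x, G.edge (i - 2) w x ∧
    ((G.Admits (i - 1) w ∧ G.sgn w (i - 1) = G.sgn x (i - 1)) ∨
     (¬G.Admits (i - 1) w ∧ ∃ z, G.edge (i - 1) x z ∧ G.sgn w i = G.sgn z i))

/-- Twice the number of edges of colors `i-1, i` in the connected component of
`v0` under `E_(i-1) ∪ E_i` (each edge is counted once for each orientation). -/
def twoColorEdgeCount (G : SCG V n N) (i : ℕ) (v0 : V) : ℕ :=
  Set.ncard {t : ℕ × V × V | (t.1 = i - 1 ∨ t.1 = i) ∧ G.edge t.1 t.2.1 t.2.2 ∧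
    G.ReachS {i - 1, i} v0 t.2.1}

/-- Axiom 4'a: every nontrivial connected component of `E_(i-1) ∪ E_i` has
either two or four edges. -/
def Ax4a (G : SCG V n N) : Prop :=
  ∀ i, 2 < i → i < n → ∀ v0 : V,
    (∃ a b j, G.ReachS {i - 1, i} v0 a ∧ (j = i - 1 ∨ j = i) ∧ G.edge j a b) →
    G.twoColorEdgeCount i v0 = 4 ∨ G.twoColorEdgeCount i v0 = 8

/-- Axiom 4'b. -/
def Ax4b (G : SCG V n N) : Prop :=
  ∀ i, 3 < i → i < n → ∀ w x z, G.edge (i - 2) w x → G.edge i w z →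
    G.sgn w (i - 1) = -G.sgn x (i - 1) → G.sgn w (i - 2) = -G.sgn z (i - 2) →
    ∃ y, G.edge (i - 1) w y ∧ (y = x ∨ y = z)

/-- Axiom 4'c. -/
def Ax4c (G : SCG V n N) : Prop :=
  ∀ i, 3 < i → i < n → ∀ w x, G.edge (i - 2) w x → G.TypeC i w → G.TypeW (i + 1) w →
    G.TypeC i x ∧ G.TypeW (i + 1) x

/-- The restricted degree-4 signature of a vertex. -/
def sig3 (G : SCG V n N) (i : ℕ) (v : V) : ℕ → ℤ := fun j =>
  if j = 1 then G.sgn v (i - 2) else if j = 2 then G.sgn v (i - 1) else G.sgn v i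

/-- The restricted degree-5 signature of a vertex. -/
def sig4 (G : SCG V n N) (i : ℕ) (v : V) : ℕ → ℤ := fun j =>
  if j = 1 then G.sgn v (i - 3) else if j = 2 then G.sgn v (i - 2)
  else if j = 3 then G.sgn v (i - 1) else G.sgn v i

/-- Local Schur positivity: the restricted degree-4 and degree-5 generating
functions of the two- and three-color connected components are symmetric and
Schur positive. -/
def LSP (G : SCG V n N) : Prop :=
  (∀ i, 2 < i → i < n → ∀ v0 : V,
    MvPSSymmetric (∑ᶠ v : {v : V // G.ReachS {i - 1, i} v0 v}, Qfun ℤ 4 (G.sig3 i v.1)) ∧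
    SchurPositive (∑ᶠ v : {v : V // G.ReachS {i - 1, i} v0 v}, Qfun ℤ 4 (G.sig3 i v.1))) ∧
  (∀ i, 3 < i → i < n → ∀ v0 : V,
    MvPSSymmetric (∑ᶠ v : {v : V // G.ReachS {i - 2, i - 1, i} v0 v}, Qfun ℤ 5 (G.sig4 i v.1)) ∧
    SchurPositive (∑ᶠ v : {v : V // G.ReachS {i - 2, i - 1, i} v0 v}, Qfun ℤ 5 (G.sig4 i v.1)))

/-- A D graph: a locally Schur positive signed colored graph satisfying dual
equivalence axioms 1, 2, 3 and 5 together with axiom 4'. -/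
def IsDGraph (G : SCG V n N) : Prop :=
  G.LSP ∧ G.Ax1 ∧ G.Ax2 ∧ G.Ax3 ∧ G.Ax5 ∧ G.Ax4a ∧ G.Ax4b ∧ G.Ax4c

/-- The set `W_i(G)` of vertices of `i`-type W whose `(i-1)`-neighbor and
`i`-neighbor differ. -/
def Wset (G : SCG V n N) (i : ℕ) : Set V :=
  {w | G.TypeW i w ∧ ∀ x y, G.edge (i - 1) w x → G.edge i w y → x ≠ y}

/-- The set `X_i(G)` of vertices of `i`-type C with no `(i-1)`-neighbor such
that `E_(i-2) E_i ≠ E_i E_(i-2)` at the vertex. -/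
def Xset (G : SCG V n N) (i : ℕ) : Set V :=
  {x | G.TypeC i x ∧ ¬G.Admits (i - 1) x ∧
    ∀ a b, (∃ z, G.edge i x z ∧ G.edge (i - 2) z a) →
      (∃ z, G.edge (i - 2) x z ∧ G.edge i z b) → a ≠ b}

/-- `f` is an isomorphism between the `i`-packages of `w` and `u`: a bijection
preserving the truncated signature coordinates `σ_1, …, σ_(i-3), σ_(i+2), …,
σ_(N-1)` and all edges of colors `≤ i-3` or `≥ i+3`. -/
def PackIso (G : SCG V n N) (i : ℕ) (w u : V)
    (f : {v : V // G.packReach i w v} → {v : V // G.packReach i u v}) : Prop :=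
  Function.Bijective f ∧
  (∀ v j, 1 ≤ j → (j + 3 ≤ i ∨ (i + 2 ≤ j ∧ j < N)) → G.sgn (f v).1 j = G.sgn v.1 j) ∧
  ∀ j, j + 3 ≤ i ∨ i + 3 ≤ j → ∀ a b, G.edge j a.1 b.1 ↔ G.edge j (f a).1 (f b).1

/-- One half of the new `i`-edge relation used to redefine `E_i` from a package
isomorphism `f` between the `i`-packages of `w` and `u`. -/
def newEdgePhi (G : SCG V n N) (i : ℕ) (w u : V)
    (f : {v : V // G.packReach i w v} → {v : V // G.packReach i u v}) (a b : V) : Prop :=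
  (∃ ha : G.packReach i w a, b = (f ⟨a, ha⟩).1) ∨
  (∃ a' b', ∃ ha' : G.packReach i w a', G.edge i a a' ∧ b' = (f ⟨a', ha'⟩).1 ∧ G.edge i b' b) ∨
  (G.edge i a b ∧ ¬G.packReach i w a ∧ ¬G.packReach i u a ∧
    ¬G.packReach i w b ∧ ¬G.packReach i u b)

/-- The graph obtained from `G` by replacing the edges `E_i` according to the
involution determined by the package isomorphism `f` (this is `φ_i^w(G)`,
and also `ψ_i^x(G)` when applied to the appropriate packages). -/
def phiGraph (G : SCG V n N) (i : ℕ) (hi : 1 < i) (hin : i < n) (w u : V)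
    (f : {v : V // G.packReach i w v} → {v : V // G.packReach i u v}) : SCG V n N where
  sgn := G.sgn
  edge j a b :=
    if j = i then a ≠ b ∧ (G.newEdgePhi i w u f a b ∨ G.newEdgePhi i w u f b a)
    else G.edge j a b
  sgn_pm := G.sgn_pm
  edge_symm := by
    intro j a b h
    by_cases hj : j = i
    · rw [if_pos hj] at h ⊢
      exact ⟨h.1.symm, h.2.symm⟩
    · rw [if_neg hj] at h ⊢
      exact G.edge_symm j a b h
  edge_ne := by
    intro j a b h
    by_cases hj : j = i
    · rw [if_pos hj] at h; exact h.1
    · rw [if_neg hj] at h; exact G.edge_ne j a b h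
  edge_supp := by
    intro j a b h
    by_cases hj : j = i
    · subst hj; exact ⟨hi, hin⟩
    · rw [if_neg hj] at h; exact G.edge_supp j a b h

end SCG

/-! ### Fillings and Macdonald polynomials via Haglund's formula -/

/-- The weight of a filling of a Young diagram. -/
def fillingWeight (ρ : YoungDiagram) (S : ℕ × ℕ → ℕ) : ℕ →₀ ℕ :=
  ∑ x ∈ ρ.cells, Finsupp.single (S x - 1) 1

/-- The descent set of a filling: cells not in the first row whose entry
exceeds the entry immediately below (i.e. south, in French convention). -/
def macDes (ρ : YoungDiagram) (S : ℕ × ℕ → ℕ) : Set (ℕ × ℕ) :=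
  {x | x ∈ ρ.cells ∧ 1 ≤ x.1 ∧ S (x.1 - 1, x.2) < S x}

/-- The arm length of a cell. -/
def armLen (ρ : YoungDiagram) (x : ℕ × ℕ) : ℕ := Set.ncard {c' | x.2 < c' ∧ (x.1, c') ∈ ρ.cells}

/-- The leg length of a cell. -/
def legLen (ρ : YoungDiagram) (x : ℕ × ℕ) : ℕ := Set.ncard {r' | x.1 < r' ∧ (r', x.2) ∈ ρ.cells}

/-- The major index of a filling. -/
def macMaj (ρ : YoungDiagram) (S : ℕ × ℕ → ℕ) : ℕ :=
  (macDes ρ S).ncard + ∑ᶠ x ∈ macDes ρ S, legLen ρ x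

/-- The set of inversion pairs (attacking pairs in reading order with the first
entry larger). -/
def macInvSet (ρ : YoungDiagram) (S : ℕ × ℕ → ℕ) : Set ((ℕ × ℕ) × (ℕ × ℕ)) :=
  {p | p.1 ∈ ρ.cells ∧ p.2 ∈ ρ.cells ∧
    ((p.1.1 = p.2.1 ∧ p.1.2 < p.2.2) ∨ (p.1.1 = p.2.1 + 1 ∧ p.2.2 < p.1.2)) ∧
    S p.2 < S p.1}

/-- The inversion statistic of a filling. -/
def macInv (ρ : YoungDiagram) (S : ℕ × ℕ → ℕ) : ℕ :=
  (macInvSet ρ S).ncard - ∑ᶠ x ∈ macDes ρ S, armLen ρ x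

/-- The transformed Macdonald polynomial via Haglund's formula
`H̃_μ(x; q, t) = Σ_S q^(inv S) t^(maj S) x^S`, with `q = X 0` and `t = X 1`. -/
def macdonald (ρ : YoungDiagram) : MvPowerSeries ℕ (MvPolynomial (Fin 2) ℤ) :=
  fun d => ∑ᶠ S : {S : ℕ × ℕ → ℕ //
      (∀ x ∈ ρ.cells, 1 ≤ S x) ∧ (∀ x, x ∉ ρ.cells → S x = 0) ∧ fillingWeight ρ S = d},
    (MvPolynomial.X 0 : MvPolynomial (Fin 2) ℤ) ^ macInv ρ S.1 *
      (MvPolynomial.X 1 : MvPolynomial (Fin 2) ℤ) ^ macMaj ρ S.1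

/-! ### Augmented standard dual equivalence graphs -/

/-- Standard tableaux of shape `ρ` augmented by the fixed filling `A` on the
entries `n+1, …, |ρ|` (the cell of the entry `v` being `A v`). -/
def AugSYT (ρ : YoungDiagram) (n : ℕ) (A : ℕ → ℕ × ℕ) : Type :=
  {T : SYT ρ // ∀ m : Fin ρ.card, n ≤ (m : ℕ) → T.cellOf m = A ((m : ℕ) + 1)}

instance (ρ : YoungDiagram) (n : ℕ) (A : ℕ → ℕ × ℕ) : Finite (AugSYT ρ n A) := by
  unfold AugSYT; infer_instance

/-- The augmented standard dual equivalence graph `G_(λ,A)`, a signed colored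
graph of type `(n, N)` on standard tableaux of shape `ρ` (of size `N`)
restricting to `A` on `ρ/λ`, with edges the elementary dual equivalences for
`i-1, i, i+1` with `i < n`. -/
def augDEG (n N : ℕ) (ρ : YoungDiagram) (hρ : ρ.card = N) (A : ℕ → ℕ × ℕ) :
    SCG (AugSYT ρ n A) n N where
  sgn T := sytSgn T.1
  edge i T U := i < n ∧ T ≠ U ∧ (stdEdgeCore ρ i T.1 U.1 ∨ stdEdgeCore ρ i U.1 T.1)
  sgn_pm := by
    intro v i _ _
    simp only [sytSgn]
    split
    · exact Or.inl rfl
    · exact Or.inr rfl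
  edge_symm := by
    rintro i T U ⟨h1, h2, h3⟩
    exact ⟨h1, h2.symm, h3.symm⟩
  edge_ne := fun i T U h => h.2.1
  edge_supp := by
    rintro i T U ⟨h1, h2, h3 | h3⟩ <;> exact ⟨h3.1, h1⟩


/-! ### Auxiliary development -/

namespace DEGAux

section OrderLemmas

lemma rb_trans {x y z : ℕ × ℕ} (h1 : readBefore x y) (h2 : readBefore y z) :
    readBefore x z := by
  unfold readBefore at *
  rcases h1 with h1 | ⟨e1, c1⟩ <;> rcases h2 with h2 | ⟨e2, c2⟩
  · exact Or.inl (lt_trans h1 h2)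
  · exact Or.inl (by omega)
  · exact Or.inl (by omega)
  · exact Or.inr ⟨by omega, by omega⟩

lemma rb_asymm {x y : ℕ × ℕ} (h1 : readBefore x y) : ¬ readBefore y x := by
  unfold readBefore at *
  rcases h1 with h1 | ⟨e1, c1⟩ <;> rintro (h2 | ⟨e2, c2⟩) <;> omega

lemma rb_total {x y : ℕ × ℕ} (h : x ≠ y) : readBefore x y ∨ readBefore y x := by
  unfold readBefore cellContent
  by_contra hc
  push_neg at hc
  apply h
  have : x.2 = y.2 ∧ x.1 = y.1 := by omega
  exact Prod.ext this.2 this.1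

end OrderLemmas

section SYTBasics

variable {μ : YoungDiagram}

lemma SYT.ext' {T U : SYT μ} (h : T.cellOf = U.cellOf) : T = U := by
  cases T; cases U; simpa using h

lemma cell_def (T : SYT μ) (a : ℕ) (h1 : 1 ≤ a) (h2 : a ≤ μ.card) :
    T.cell a = T.cellOf ⟨a - 1, by omega⟩ := by
  unfold SYT.cell
  rw [dif_pos ⟨h1, h2⟩]

lemma cell_mem (T : SYT μ) (a : ℕ) (h1 : 1 ≤ a) (h2 : a ≤ μ.card) :
    T.cell a ∈ μ.cells := by
  rw [cell_def T a h1 h2]; exact T.mem_cells _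

lemma cell_inj (T : SYT μ) {a b : ℕ} (ha1 : 1 ≤ a) (ha2 : a ≤ μ.card)
    (hb1 : 1 ≤ b) (hb2 : b ≤ μ.card) (h : T.cell a = T.cell b) : a = b := by
  rw [cell_def T a ha1 ha2, cell_def T b hb1 hb2] at h
  have := T.inj h
  have := congrArg Fin.val this
  simp only at this
  omega

lemma cell_ne (T : SYT μ) {a b : ℕ} (ha1 : 1 ≤ a) (ha2 : a ≤ μ.card)
    (hb1 : 1 ≤ b) (hb2 : b ≤ μ.card) (h : a ≠ b) : T.cell a ≠ T.cell b :=
  fun hc => h (cell_inj T ha1 ha2 hb1 hb2 hc)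

lemma SYT.ext_cell {T U : SYT μ}
    (h : ∀ x, 1 ≤ x → x ≤ μ.card → T.cell x = U.cell x) : T = U := by
  apply SYT.ext'
  funext k
  have h1 : 1 ≤ (k : ℕ) + 1 := by omega
  have h2 : (k : ℕ) + 1 ≤ μ.card := by omega
  have := h ((k : ℕ) + 1) h1 h2
  rw [cell_def T _ h1 h2, cell_def U _ h1 h2] at this
  simpa using this

lemma cellOf_surj (T : SYT μ) {x : ℕ × ℕ} (hx : x ∈ μ.cells) :
    ∃ k, T.cellOf k = x := by
  classical
  have hinj : Function.Injective
      (fun k : Fin μ.card => (⟨T.cellOf k, T.mem_cells k⟩ : {y // y ∈ μ.cells})) := by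
    intro a b hab
    exact T.inj (congrArg Subtype.val hab)
  have hcard : Fintype.card (Fin μ.card) = Fintype.card {y // y ∈ μ.cells} := by
    simp [YoungDiagram.card]
  have hsurj := (Fintype.bijective_iff_injective_and_card _).2 ⟨hinj, hcard⟩
  obtain ⟨k, hk⟩ := hsurj.2 ⟨x, hx⟩
  exact ⟨k, congrArg Subtype.val hk⟩

/-- A corner (removable cell) of a Young diagram. -/
def IsCorner (μ : YoungDiagram) (x : ℕ × ℕ) : Prop :=
  x ∈ μ.cells ∧ (x.1 + 1, x.2) ∉ μ.cells ∧ (x.1, x.2 + 1) ∉ μ.cells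

/-- The cell containing the largest entry. -/
def topcell (T : SYT μ) : ℕ × ℕ := T.cell μ.card

lemma top_corner (T : SYT μ) (h : 0 < μ.card) : IsCorner μ (topcell T) := by
  unfold topcell
  refine ⟨cell_mem T _ h le_rfl, ?_, ?_⟩
  · intro hc
    rw [cell_def T _ h le_rfl] at hc
    obtain ⟨k, hk⟩ := cellOf_surj T hc
    have hlt := T.col_mono ⟨μ.card - 1, by omega⟩ k (by rw [hk]) (by rw [hk]; simp)
    have hk2 := k.isLt
    simp [Fin.lt_def] at hlt
    omega
  · intro hc
    rw [cell_def T _ h le_rfl] at hc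
    obtain ⟨k, hk⟩ := cellOf_surj T hc
    have hlt := T.row_mono ⟨μ.card - 1, by omega⟩ k (by rw [hk]) (by rw [hk]; simp)
    have hk2 := k.isLt
    simp [Fin.lt_def] at hlt
    omega

end SYTBasics

section Diagrams

variable {μ : YoungDiagram}

lemma corner_antichain {c d : ℕ × ℕ} (hc : IsCorner μ c) (hd : IsCorner μ d)
    (h : c.1 < d.1) : d.2 < c.2 := by
  by_contra hd2
  push_neg at hd2
  exact hc.2.1 (μ.isLowerSet (by exact ⟨by omega, by simpa using hd2⟩) hd.1)

lemma corner_row_inj {c d : ℕ × ℕ} (hc : IsCorner μ c) (hd : IsCorner μ d)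
    (h : c.1 = d.1) : c = d := by
  rcases Nat.lt_trichotomy c.2 d.2 with hlt | heq | hgt
  · exact absurd (μ.isLowerSet (show (c.1, c.2+1) ≤ d from ⟨le_of_eq h, by omega⟩) hd.1)
      hc.2.2
  · exact Prod.ext h heq
  · exact absurd (μ.isLowerSet (show (d.1, d.2+1) ≤ c from ⟨le_of_eq h.symm, by omega⟩) hc.1)
      hd.2.2

lemma corner_above {x : ℕ × ℕ} (hx : x ∈ μ.cells) :
    ∃ d, IsCorner μ d ∧ x ≤ d := by
  classical
  have hne : (μ.cells.filter (fun y => x ≤ y)).Nonempty := ⟨x, by simp [hx]⟩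
  obtain ⟨d, hd, hmax⟩ : ∃ d ∈ μ.cells.filter (fun y => x ≤ y),
      ∀ y ∈ μ.cells.filter (fun y => x ≤ y), ¬d < y := by
    obtain ⟨d, hd⟩ := Finset.exists_maximal hne
    exact ⟨d, hd.1, fun y hy hlt => hlt.not_ge (hd.2 hy hlt.le)⟩
  simp only [Finset.mem_filter] at hd
  refine ⟨d, ⟨hd.1, ?_, ?_⟩, hd.2⟩
  · intro hmem
    exact hmax (d.1 + 1, d.2) (by
      simp only [Finset.mem_filter]
      exact ⟨hmem, le_trans hd.2 ⟨by omega, le_rfl⟩⟩)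
      (by constructor <;> simp [Prod.le_def] <;> omega)
  · intro hmem
    exact hmax (d.1, d.2 + 1) (by
      simp only [Finset.mem_filter]
      exact ⟨hmem, le_trans hd.2 ⟨le_rfl, by omega⟩⟩)
      (by constructor <;> simp [Prod.le_def] <;> omega)

/-- Erase a corner of a Young diagram. -/
def YDerase (μ : YoungDiagram) (c : ℕ × ℕ) (hc : IsCorner μ c) : YoungDiagram where
  cells := μ.cells.erase c
  isLowerSet := by
    intro y x hxy hy
    simp only [Finset.coe_erase, Set.mem_diff, Set.mem_singleton_iff, Finset.mem_coe] at hy ⊢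
    constructor
    · exact μ.isLowerSet hxy hy.1
    · rintro rfl
      rcases Prod.le_def.1 hxy with ⟨h1, h2⟩
      rcases Nat.lt_or_ge x.1 y.1 with h | h
      · exact hc.2.1 (μ.isLowerSet (show (x.1 + 1, x.2) ≤ y from ⟨by omega, h2⟩) hy.1)
      · have hx1 : x.1 = y.1 := by omega
        have : x.2 < y.2 := by
          rcases Nat.lt_or_ge x.2 y.2 with h' | h'
          · exact h'
          · exact absurd (Prod.ext hx1 (by omega)) (Ne.symm hy.2)
        exact hc.2.2 (μ.isLowerSet (show (x.1, x.2 + 1) ≤ y from ⟨by omega, by omega⟩) hy.1)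

lemma YDerase_cells (hc : IsCorner μ c) : (YDerase μ c hc).cells = μ.cells.erase c := rfl

lemma YDerase_card (hc : IsCorner μ c) : (YDerase μ c hc).card = μ.card - 1 := by
  simp only [YoungDiagram.card, YDerase_cells]
  exact Finset.card_erase_of_mem hc.1

lemma YDerase_card' (hc : IsCorner μ c) : μ.card = (YDerase μ c hc).card + 1 := by
  have h0 : 0 < μ.card := Finset.card_pos.2 ⟨c, hc.1⟩
  rw [YDerase_card]
  omega

lemma corner_of_erase {c d : ℕ × ℕ} (hc : IsCorner μ c) (hd : IsCorner μ d) (hne : d ≠ c) :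
    IsCorner (YDerase μ c hc) d := by
  refine ⟨Finset.mem_erase.2 ⟨hne, hd.1⟩, ?_, ?_⟩
  · intro hmem
    exact hd.2.1 (Finset.mem_of_mem_erase hmem)
  · intro hmem
    exact hd.2.2 (Finset.mem_of_mem_erase hmem)

end Diagrams

section RestrictExtend

variable {μ : YoungDiagram} {c : ℕ × ℕ}

/-- Extend a tableau of `μ ∖ {c}` by a top entry at the corner `c`. -/
def extSYT (hc : IsCorner μ c) (U : SYT (YDerase μ c hc)) : SYT μ where
  cellOf k := if h : (k : ℕ) < (YDerase μ c hc).card then U.cellOf ⟨k, h⟩ else c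
  mem_cells k := by
    split
    · exact Finset.mem_of_mem_erase (U.mem_cells _)
    · exact hc.1
  inj := by
    have hcard := YDerase_card' hc
    intro k l hkl
    simp only at hkl
    split at hkl <;> rename_i hk <;> split at hkl <;> rename_i hl
    · have h' := congrArg Fin.val (U.inj hkl)
      exact Fin.ext h'
    · exact absurd hkl (Finset.mem_erase.1 (U.mem_cells ⟨(k : ℕ), hk⟩)).1
    · exact absurd hkl.symm (Finset.mem_erase.1 (U.mem_cells ⟨(l : ℕ), hl⟩)).1
    · have h1 := k.isLt
      have h2 := l.isLt
      apply Fin.ext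
      omega
  row_mono := by
    have hcard := YDerase_card' hc
    intro k l hr hcol
    rcases Nat.lt_or_ge (k : ℕ) (YDerase μ c hc).card with hk | hk <;>
      rcases Nat.lt_or_ge (l : ℕ) (YDerase μ c hc).card with hl | hl
    · rw [dif_pos hk, dif_pos hl] at hr hcol
      exact Fin.lt_def.2 (Fin.lt_def.1 (U.row_mono ⟨(k : ℕ), hk⟩ ⟨(l : ℕ), hl⟩ hr hcol))
    · exact Fin.lt_def.2 (by omega)
    · rw [dif_neg (by omega), dif_pos hl] at hr hcol
      exfalso
      have hmem : U.cellOf ⟨(l : ℕ), hl⟩ ∈ μ.cells :=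
        Finset.mem_of_mem_erase (U.mem_cells _)
      exact hc.2.2 (μ.isLowerSet
        (show (c.1, c.2 + 1) ≤ U.cellOf ⟨(l : ℕ), hl⟩ from ⟨by omega, by omega⟩) hmem)
    · rw [dif_neg (show ¬(k : ℕ) < (YDerase μ c hc).card by omega),
        dif_neg (show ¬(l : ℕ) < (YDerase μ c hc).card by omega)] at hcol
      omega
  col_mono := by
    have hcard := YDerase_card' hc
    intro k l hr hcol
    rcases Nat.lt_or_ge (k : ℕ) (YDerase μ c hc).card with hk | hk <;>
      rcases Nat.lt_or_ge (l : ℕ) (YDerase μ c hc).card with hl | hl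
    · rw [dif_pos hk, dif_pos hl] at hr hcol
      exact Fin.lt_def.2 (Fin.lt_def.1 (U.col_mono ⟨(k : ℕ), hk⟩ ⟨(l : ℕ), hl⟩ hr hcol))
    · exact Fin.lt_def.2 (by omega)
    · rw [dif_neg (by omega), dif_pos hl] at hr hcol
      exfalso
      have hmem : U.cellOf ⟨(l : ℕ), hl⟩ ∈ μ.cells :=
        Finset.mem_of_mem_erase (U.mem_cells _)
      exact hc.2.1 (μ.isLowerSet
        (show (c.1 + 1, c.2) ≤ U.cellOf ⟨(l : ℕ), hl⟩ from ⟨by omega, by omega⟩) hmem)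
    · rw [dif_neg (show ¬(k : ℕ) < (YDerase μ c hc).card by omega),
        dif_neg (show ¬(l : ℕ) < (YDerase μ c hc).card by omega)] at hcol
      omega

lemma extSYT_cell_low (hc : IsCorner μ c) (U : SYT (YDerase μ c hc)) {x : ℕ}
    (h1 : 1 ≤ x) (h2 : x ≤ (YDerase μ c hc).card) :
    (extSYT hc U).cell x = U.cell x := by
  have hcard := YDerase_card' hc
  rw [cell_def _ x h1 (by omega), cell_def _ x h1 h2]
  simp only [extSYT]
  rw [dif_pos (by omega)]

lemma extSYT_cell_top (hc : IsCorner μ c) (U : SYT (YDerase μ c hc)) :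
    (extSYT hc U).cell μ.card = c := by
  have hcard := YDerase_card' hc
  rw [cell_def _ _ (by omega) le_rfl]
  simp only [extSYT]
  rw [dif_neg (by omega)]

lemma extSYT_topcell (hc : IsCorner μ c) (U : SYT (YDerase μ c hc)) :
    topcell (extSYT hc U) = c := extSYT_cell_top hc U

lemma extSYT_inj (hc : IsCorner μ c) {U U' : SYT (YDerase μ c hc)}
    (h : extSYT hc U = extSYT hc U') : U = U' := by
  have hcard := YDerase_card' hc
  apply SYT.ext_cell
  intro x h1 h2
  have := congrArg (fun T => SYT.cell T x) h
  simpa [extSYT_cell_low hc _ h1 h2] using this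

/-- Restrict a tableau whose top entry is at `c`, to `μ ∖ {c}`. -/
def resSYT (hc : IsCorner μ c) (T : SYT μ) (htop : topcell T = c) :
    SYT (YDerase μ c hc) where
  cellOf k := T.cellOf ⟨(k : ℕ), by
    have := k.isLt
    have := YDerase_card' hc
    omega⟩
  mem_cells k := by
    apply Finset.mem_erase.2
    refine ⟨?_, T.mem_cells _⟩
    intro hk
    have h0 : 0 < μ.card := Finset.card_pos.2 ⟨c, hc.1⟩
    have htop' : T.cellOf ⟨μ.card - 1, by omega⟩ = c := by
      have h2 := htop
      unfold topcell at h2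
      rwa [cell_def _ _ h0 le_rfl] at h2
    have heq := congrArg Fin.val (T.inj (hk.trans htop'.symm))
    have hlt := k.isLt
    have hcd := YDerase_card' hc
    simp only at heq
    omega
  inj := by
    intro k l hkl
    have h' := congrArg Fin.val (T.inj hkl)
    exact Fin.ext h'
  row_mono := fun k l hr hcol => Fin.lt_def.2 (Fin.lt_def.1 (T.row_mono _ _ hr hcol))
  col_mono := fun k l hr hcol => Fin.lt_def.2 (Fin.lt_def.1 (T.col_mono _ _ hr hcol))

lemma ext_res (hc : IsCorner μ c) (T : SYT μ) (htop : topcell T = c) :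
    extSYT hc (resSYT hc T htop) = T := by
  have hcard := YDerase_card' hc
  apply SYT.ext'
  funext k
  simp only [extSYT, resSYT]
  split
  · rfl
  · rename_i hk
    have h0 : 0 < μ.card := by omega
    have hkval : (k : ℕ) = μ.card - 1 := by
      have := k.isLt
      omega
    rw [← htop]
    unfold topcell
    rw [cell_def _ _ h0 le_rfl]
    congr 1
    exact Fin.ext (by simp [hkval])

end RestrictExtend

section Super

/-- Row-major order on cells. -/
def rrel : ℕ × ℕ → ℕ × ℕ → Prop := fun x y => x.1 < y.1 ∨ (x.1 = y.1 ∧ x.2 ≤ y.2)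

instance : DecidableRel rrel := fun x y => by unfold rrel; infer_instance

instance : IsTrans (ℕ × ℕ) rrel := ⟨by intro a b c h1 h2; unfold rrel at *; omega⟩

instance : IsAntisymm (ℕ × ℕ) rrel := ⟨by
  intro a b h1 h2
  unfold rrel at *
  have : a.1 = b.1 ∧ a.2 = b.2 := by omega
  exact Prod.ext this.1 this.2⟩

instance : IsTotal (ℕ × ℕ) rrel := ⟨by intro a b; unfold rrel; omega⟩

/-- The row-superstandard tableau of any shape. -/
def superSYT (μ : YoungDiagram) : SYT μ where
  cellOf k := (μ.cells.sort rrel).get ⟨(k : ℕ), by rw [Finset.length_sort]; exact k.isLt⟩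
  mem_cells k := by
    exact (Finset.mem_sort rrel).1 (List.get_mem _ _)
  inj := by
    intro k l hkl
    have hnd := μ.cells.sort_nodup rrel
    have h' := congrArg Fin.val ((List.Nodup.get_inj_iff hnd).1 hkl)
    exact Fin.ext h'
  row_mono := by
    intro k l hr hcol
    have hs := μ.cells.pairwise_sort rrel
    by_contra hkl
    rcases Fin.lt_or_le l k with hlt | hle
    · have hrel := hs.rel_get_of_lt (a := ⟨(l : ℕ), by rw [Finset.length_sort]; exact l.isLt⟩)
        (b := ⟨(k : ℕ), by rw [Finset.length_sort]; exact k.isLt⟩) (by exact hlt)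
      rcases hrel with h | ⟨h1, h2⟩ <;> omega
    · have : k = l := le_antisymm hle (not_lt.1 hkl)
      rw [this] at hcol
      omega
  col_mono := by
    intro k l hr hcol
    have hs := μ.cells.pairwise_sort rrel
    by_contra hkl
    rcases Fin.lt_or_le l k with hlt | hle
    · have hrel := hs.rel_get_of_lt (a := ⟨(l : ℕ), by rw [Finset.length_sort]; exact l.isLt⟩)
        (b := ⟨(k : ℕ), by rw [Finset.length_sort]; exact k.isLt⟩) (by exact hlt)
      rcases hrel with h | ⟨h1, h2⟩ <;> omega
    · have : k = l := le_antisymm hle (not_lt.1 hkl)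
      rw [this] at hcol
      omega

end Super

section Edges

variable {μ : YoungDiagram}

lemma swapEq_cell_a {T U : SYT μ} {a b : ℕ} (sw : swapEq T U a b)
    (ha1 : 1 ≤ a) (ha2 : a ≤ μ.card) : U.cell a = T.cell b := by
  have h := sw a ha1 ha2
  rwa [if_pos rfl] at h

lemma swapEq_cell_b {T U : SYT μ} {a b : ℕ} (sw : swapEq T U a b) (hab : a ≠ b)
    (hb1 : 1 ≤ b) (hb2 : b ≤ μ.card) : U.cell b = T.cell a := by
  have h := sw b hb1 hb2
  rwa [if_neg (Ne.symm hab), if_pos rfl] at h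

lemma swapEq_cell_other {T U : SYT μ} {a b x : ℕ} (sw : swapEq T U a b)
    (hx1 : 1 ≤ x) (hx2 : x ≤ μ.card) (hxa : x ≠ a) (hxb : x ≠ b) :
    U.cell x = T.cell x := by
  have h := sw x hx1 hx2
  rwa [if_neg hxa, if_neg hxb] at h

lemma swapEq_symm {T U : SYT μ} {a b : ℕ} (sw : swapEq T U a b) (hab : a ≠ b)
    (ha1 : 1 ≤ a) (ha2 : a ≤ μ.card) (hb1 : 1 ≤ b) (hb2 : b ≤ μ.card) :
    swapEq U T a b := by
  intro x hx1 hx2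
  by_cases hxa : x = a
  · subst hxa
    rw [if_pos rfl, swapEq_cell_b sw hab hb1 hb2]
  · by_cases hxb : x = b
    · subst hxb
      rw [if_neg hxa, if_pos rfl, swapEq_cell_a sw ha1 ha2]
    · rw [if_neg hxa, if_neg hxb, swapEq_cell_other sw hx1 hx2 hxa hxb]

lemma core_symm {T U : SYT μ} {i : ℕ} (h : stdEdgeCore μ i T U) :
    stdEdgeCore μ i U T := by
  obtain ⟨hi1, hi2, hor⟩ := h
  have hm1 : 1 ≤ i - 1 := by omega
  have hm2 : i - 1 ≤ μ.card := by omega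
  have hi1' : 1 ≤ i := by omega
  have hi2' : i ≤ μ.card := by omega
  have hp1 : 1 ≤ i + 1 := by omega
  have hp2 : i + 1 ≤ μ.card := by omega
  refine ⟨hi1, hi2, ?_⟩
  rcases hor with ⟨pb, sw⟩ | ⟨pb, sw⟩
  · left
    have e1 : U.cell (i - 1) = T.cell i := swapEq_cell_a sw hm1 hm2
    have e2 : U.cell i = T.cell (i - 1) := swapEq_cell_b sw (by omega) hi1' hi2'
    have e3 : U.cell (i + 1) = T.cell (i + 1) :=
      swapEq_cell_other sw hp1 hp2 (by omega) (by omega)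
    constructor
    · unfold posBetween at pb ⊢
      rw [e1, e2, e3]
      exact Or.symm pb
    · exact swapEq_symm sw (by omega) hm1 hm2 hi1' hi2'
  · right
    have e1 : U.cell i = T.cell (i + 1) := swapEq_cell_a sw hi1' hi2'
    have e2 : U.cell (i + 1) = T.cell i := swapEq_cell_b sw (by omega) hp1 hp2
    have e3 : U.cell (i - 1) = T.cell (i - 1) :=
      swapEq_cell_other sw hm1 hm2 (by omega) (by omega)
    constructor
    · unfold posBetween at pb ⊢
      rw [e1, e2, e3]
      exact Or.symm pb
    · exact swapEq_symm sw (by omega) hi1' hi2' hp1 hp2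

lemma core_sgn {T U : SYT μ} {i : ℕ} (h : stdEdgeCore μ i T U) :
    sytSgn T (i - 1) = -sytSgn T i := by
  obtain ⟨hi1, hi2, hor⟩ := h
  have hstep : i - 1 + 1 = i := by omega
  unfold sytSgn
  rw [hstep]
  have pb : posBetween T i (i + 1) (i - 1) ∨ posBetween T i (i - 1) (i + 1) :=
    hor.imp And.left And.left
  unfold posBetween at pb
  rcases pb with (⟨h1, h2⟩ | ⟨h1, h2⟩) | (⟨h1, h2⟩ | ⟨h1, h2⟩)
  · rw [if_pos h1, if_neg (rb_asymm (rb_trans h1 h2))]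
  · rw [if_neg (rb_asymm h2), if_pos (rb_trans h1 h2)]
    norm_num
  · rw [if_neg (rb_asymm h1), if_pos (rb_trans h1 h2)]
  · rw [if_neg (rb_asymm (rb_trans h1 h2)), if_pos h2]
    norm_num

lemma pb_not_both {T : SYT μ} {i : ℕ}
    (h1 : posBetween T i (i + 1) (i - 1)) (h2 : posBetween T i (i - 1) (i + 1)) :
    False := by
  unfold posBetween at h1 h2
  rcases h1 with ⟨a1, a2⟩ | ⟨a1, a2⟩ <;> rcases h2 with ⟨b1, b2⟩ | ⟨b1, b2⟩
  · exact rb_asymm a2 b2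
  · exact rb_asymm (rb_trans a1 a2) b2
  · exact rb_asymm a1 (rb_trans a2 b1)
  · exact rb_asymm a1 b1

lemma swapEq_det {T U U' : SYT μ} {a b : ℕ} (s1 : swapEq T U a b)
    (s2 : swapEq T U' a b) : U = U' :=
  SYT.ext_cell fun x h1 h2 => (s1 x h1 h2).trans (s2 x h1 h2).symm

lemma core_det {T U U' : SYT μ} {i : ℕ} (h : stdEdgeCore μ i T U)
    (h' : stdEdgeCore μ i T U') : U = U' := by
  obtain ⟨hi1, hi2, hor⟩ := h
  obtain ⟨_, _, hor'⟩ := h'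
  rcases hor with ⟨pb, sw⟩ | ⟨pb, sw⟩ <;> rcases hor' with ⟨pb', sw'⟩ | ⟨pb', sw'⟩
  · exact swapEq_det sw sw'
  · exact (pb_not_both pb pb').elim
  · exact (pb_not_both pb' pb).elim
  · exact swapEq_det sw sw'

lemma edge_det {T U U' : SYT μ} {i : ℕ}
    (h : stdEdgeCore μ i T U ∨ stdEdgeCore μ i U T)
    (h' : stdEdgeCore μ i T U' ∨ stdEdgeCore μ i U' T) : U = U' :=
  core_det (h.elim id core_symm) (h'.elim id core_symm)

lemma edge_sgn {T U : SYT μ} {i : ℕ}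
    (h : stdEdgeCore μ i T U ∨ stdEdgeCore μ i U T) :
    sytSgn T (i - 1) = -sytSgn T i :=
  core_sgn (h.elim id core_symm)

lemma edge_bounds {T U : SYT μ} {i : ℕ}
    (h : stdEdgeCore μ i T U ∨ stdEdgeCore μ i U T) : 1 < i ∧ i < μ.card :=
  h.elim (fun h => ⟨h.1, h.2.1⟩) fun h => ⟨h.1, h.2.1⟩

lemma core_lift {c : ℕ × ℕ} (hc : IsCorner μ c) {U U' : SYT (YDerase μ c hc)} {i : ℕ}
    (h : stdEdgeCore (YDerase μ c hc) i U U') :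
    stdEdgeCore μ i (extSYT hc U) (extSYT hc U') := by
  obtain ⟨hi1, hi2, hor⟩ := h
  have hcard := YDerase_card' hc
  have em : ∀ (X : SYT (YDerase μ c hc)) (x : ℕ), 1 ≤ x → x ≤ (YDerase μ c hc).card →
      (extSYT hc X).cell x = X.cell x := fun X x h1 h2 => extSYT_cell_low hc X h1 h2
  refine ⟨hi1, by omega, ?_⟩
  rcases hor with ⟨pb, sw⟩ | ⟨pb, sw⟩
  · left
    constructor
    · unfold posBetween at pb ⊢
      rw [em U (i - 1) (by omega) (by omega), em U i (by omega) (by omega),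
        em U (i + 1) (by omega) (by omega)]
      exact pb
    · intro x h1 h2
      by_cases hxa : x = i - 1
      · rw [if_pos hxa, hxa, em U' (i - 1) (by omega) (by omega),
          em U i (by omega) (by omega)]
        have h' := sw (i - 1) (by omega) (by omega)
        rwa [if_pos rfl] at h'
      · by_cases hxb : x = i
        · rw [if_neg hxa, if_pos hxb, hxb, em U' i (by omega) (by omega),
            em U (i - 1) (by omega) (by omega)]
          have h' := sw i (by omega) (by omega)
          rwa [if_neg (by omega), if_pos rfl] at h'
        · rw [if_neg hxa, if_neg hxb]
          by_cases hlow : x ≤ (YDerase μ c hc).card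
          · rw [em U' x h1 hlow, em U x h1 hlow]
            have h' := sw x h1 hlow
            rwa [if_neg hxa, if_neg hxb] at h'
          · have hx : x = μ.card := by omega
            rw [hx, extSYT_cell_top, extSYT_cell_top]
  · right
    constructor
    · unfold posBetween at pb ⊢
      rw [em U (i - 1) (by omega) (by omega), em U i (by omega) (by omega),
        em U (i + 1) (by omega) (by omega)]
      exact pb
    · intro x h1 h2
      by_cases hxa : x = i
      · rw [if_pos hxa, hxa, em U' i (by omega) (by omega),
          em U (i + 1) (by omega) (by omega)]
        have h' := sw i (by omega) (by omega)
        rwa [if_pos rfl] at h'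
      · by_cases hxb : x = i + 1
        · rw [if_neg hxa, if_pos hxb, hxb, em U' (i + 1) (by omega) (by omega),
            em U i (by omega) (by omega)]
          have h' := sw (i + 1) (by omega) (by omega)
          rwa [if_neg (by omega), if_pos rfl] at h'
        · rw [if_neg hxa, if_neg hxb]
          by_cases hlow : x ≤ (YDerase μ c hc).card
          · rw [em U' x h1 hlow, em U x h1 hlow]
            have h' := sw x h1 hlow
            rwa [if_neg hxa, if_neg hxb] at h'
          · have hx : x = μ.card := by omega
            rw [hx, extSYT_cell_top, extSYT_cell_top]

/-- The dual equivalence edge relation on standard tableaux. -/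
def Erel (μ : YoungDiagram) (T U : SYT μ) : Prop :=
  ∃ i, T ≠ U ∧ (stdEdgeCore μ i T U ∨ stdEdgeCore μ i U T)

/-- Connectivity by dual equivalence moves. -/
def Path (μ : YoungDiagram) : SYT μ → SYT μ → Prop := Relation.ReflTransGen (Erel μ)

lemma Erel_symm {μ : YoungDiagram} : Symmetric (Erel μ) :=
  fun _ _ ⟨i, hne, hor⟩ => ⟨i, hne.symm, hor.symm⟩

lemma Path_symm {μ : YoungDiagram} {T U : SYT μ} (h : Path μ T U) : Path μ U T :=
  @Std.Symm.symm _ (Relation.ReflTransGen (Erel μ)) (@Relation.ReflTransGen.stdSymm _ (Erel μ) ⟨fun _ _ h => Erel_symm h⟩) _ _ h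

lemma Path_lift {c : ℕ × ℕ} (hc : IsCorner μ c) {U U' : SYT (YDerase μ c hc)}
    (h : Path (YDerase μ c hc) U U') : Path μ (extSYT hc U) (extSYT hc U') :=
  Relation.ReflTransGen.lift (extSYT hc) (show ∀ A B, Erel _ A B → Erel μ (extSYT hc A) (extSYT hc B) from fun A B ⟨i, hne, hor⟩ =>
    ⟨i, fun hext => hne (extSYT_inj hc hext), hor.imp (core_lift hc) (core_lift hc)⟩) _ _ h

end Edges

section Middle

lemma cast_cell {μ ν : YoungDiagram} (h : μ = ν) (X : SYT μ) (x : ℕ) :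
    (h ▸ X).cell x = X.cell x := by subst h; rfl

lemma middleCorner {μ : YoungDiagram} {c c'' : ℕ × ℕ} (hc : IsCorner μ c)
    (hc'' : IsCorner μ c'') (hr : c.1 < c''.1)
    (hcons : ∀ e, IsCorner μ e → ¬(c.1 < e.1 ∧ e.1 < c''.1))
    (hcc : IsCorner (YDerase μ c hc) c'') :
    ∃ d, IsCorner (YDerase (YDerase μ c hc) c'' hcc) d ∧
      cellContent c'' < cellContent d ∧ cellContent d < cellContent c := by
  have hcol : c''.2 < c.2 := corner_antichain hc hc'' hr
  have hmem2 : ∀ x, x ∈ (YDerase (YDerase μ c hc) c'' hcc).cells ↔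
      x ≠ c'' ∧ x ≠ c ∧ x ∈ μ.cells := by
    intro x
    simp only [YDerase_cells, Finset.mem_erase]
  rcases Nat.lt_or_ge (c''.2 + 1) c.2 with hcase | hcase
  · refine ⟨(c.1, c.2 - 1), ⟨?_, ?_, ?_⟩, ?_, ?_⟩
    · rw [hmem2]
      refine ⟨?_, ?_, ?_⟩
      · intro h
        have h' := congrArg Prod.fst h
        simp only at h'
        omega
      · intro h
        have h' := congrArg Prod.snd h
        simp only at h'
        omega
      · exact μ.isLowerSet (show ((c.1, c.2 - 1) : ℕ × ℕ) ≤ c from ⟨le_rfl, by omega⟩) hc.1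
    · intro hmem
      rw [hmem2] at hmem
      obtain ⟨-, -, hmem⟩ := hmem
      obtain ⟨e, he, hle⟩ := corner_above hmem
      simp only [Prod.le_def] at hle
      have h1 : e.1 ≠ c''.1 := by
        intro h
        have h' := congrArg Prod.snd (corner_row_inj he hc'' h)
        omega
      have h2 : ¬c''.1 < e.1 := by
        intro h
        have := corner_antichain hc'' he h
        omega
      exact hcons e he ⟨by omega, by omega⟩
    · intro hmem
      rw [hmem2] at hmem
      exact hmem.2.1 (Prod.ext (by simp) (by simp; omega))
    · simp only [cellContent]
      omega
    · simp only [cellContent]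
      omega
  · -- c.2 = c''.2 + 1
    refine ⟨(c''.1 - 1, c''.2), ⟨?_, ?_, ?_⟩, ?_, ?_⟩
    · rw [hmem2]
      refine ⟨?_, ?_, ?_⟩
      · intro h
        have h' := congrArg Prod.fst h
        simp only at h'
        omega
      · intro h
        have h' := congrArg Prod.snd h
        simp only at h'
        omega
      · exact μ.isLowerSet
          (show ((c''.1 - 1, c''.2) : ℕ × ℕ) ≤ c'' from ⟨by omega, le_rfl⟩) hc''.1
    · intro hmem
      rw [hmem2] at hmem
      exact hmem.1 (Prod.ext (by simp; omega) (by simp))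
    · intro hmem
      rw [hmem2] at hmem
      rcases Nat.lt_or_ge c.1 (c''.1 - 1) with hint | hint
      · obtain ⟨e, he, hle⟩ := corner_above hmem.2.2
        simp only [Prod.le_def] at hle
        have : e.1 > c.1 := by omega
        have := corner_antichain hc he this
        omega
      · have h1 : c''.1 - 1 = c.1 := by omega
        exact hmem.2.1 (Prod.ext (by simp [h1]) (by simp; omega))
    · simp only [cellContent]
      omega
    · simp only [cellContent]
      omega

end Middle

section Conn

lemma sameTop {μ : YoungDiagram} (h0 : 0 < μ.card)
    (IH : ∀ ν : YoungDiagram, ν.card = μ.card - 1 → ∀ A B : SYT ν, Path ν A B)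
    (T U : SYT μ) (h : topcell T = topcell U) : Path μ T U := by
  have hcT := top_corner T h0
  have hcU : topcell U = topcell T := h.symm
  have hpath := IH (YDerase μ (topcell T) hcT) (YDerase_card hcT)
    (resSYT hcT T rfl) (resSYT hcT U hcU)
  have h2 := Path_lift hcT hpath
  rwa [ext_res, ext_res] at h2

lemma moveAdjPair {μ : YoungDiagram} {c c'' : ℕ × ℕ} (hc : IsCorner μ c)
    (hc'' : IsCorner μ c'') (hr : c.1 < c''.1)
    (hcons : ∀ e, IsCorner μ e → ¬(c.1 < e.1 ∧ e.1 < c''.1)) :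
    ∃ T₀ U₀ : SYT μ, topcell T₀ = c ∧ topcell U₀ = c'' ∧ Erel μ T₀ U₀ := by
  classical
  have hcol : c''.2 < c.2 := corner_antichain hc hc'' hr
  have hne : c ≠ c'' := by
    intro h
    have h' := congrArg Prod.fst h
    omega
  -- μ has at least 3 cells
  have hmem3 : (c.1, c''.2) ∈ μ.cells :=
    μ.isLowerSet (show ((c.1, c''.2) : ℕ × ℕ) ≤ c from ⟨le_rfl, le_of_lt hcol⟩) hc.1
  have h3 : 3 ≤ μ.card := by
    have hsub : ({c, c'', (c.1, c''.2)} : Finset (ℕ × ℕ)) ⊆ μ.cells := by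
      intro x hx
      rcases Finset.mem_insert.1 hx with rfl | hx
      · exact hc.1
      rcases Finset.mem_insert.1 hx with rfl | hx
      · exact hc''.1
      · rw [Finset.mem_singleton] at hx
        subst hx
        exact hmem3
    have hcard3 : ({c, c'', (c.1, c''.2)} : Finset (ℕ × ℕ)).card = 3 := by
      rw [Finset.card_insert_of_notMem, Finset.card_insert_of_notMem,
        Finset.card_singleton]
      · simp only [Finset.mem_singleton]
        intro h
        have h' := congrArg Prod.fst h
        simp only at h'
        omega
      · simp only [Finset.mem_insert, Finset.mem_singleton]
        rintro (h | h)
        · have h' := congrArg Prod.fst h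
          omega
        · have h' := congrArg Prod.snd h
          simp only at h'
          omega
    have := Finset.card_le_card hsub
    show 3 ≤ μ.cells.card
    omega
  have hcc : IsCorner (YDerase μ c hc) c'' := corner_of_erase hc hc'' (Ne.symm hne)
  obtain ⟨d, hd, hcd1, hcd2⟩ := middleCorner hc hc'' hr hcons hcc
  have hcc' : IsCorner (YDerase μ c'' hc'') c := corner_of_erase hc'' hc hne
  have hμν : YDerase (YDerase μ c hc) c'' hcc = YDerase (YDerase μ c'' hc'') c hcc' := by
    apply YoungDiagram.ext
    simp only [YDerase_cells]
    ext x
    simp only [Finset.mem_erase]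
    tauto
  set X : SYT (YDerase (YDerase μ c hc) c'' hcc) :=
    extSYT hd (superSYT (YDerase _ d hd)) with hX
  set T₀ : SYT μ := extSYT hc (extSYT hcc X) with hT₀
  set U₀ : SYT μ := extSYT hc'' (extSYT hcc' (hμν ▸ X)) with hU₀
  have hm1 := YDerase_card' hc
  have hm2 := YDerase_card' hcc
  have hn1 := YDerase_card' hc''
  have hn2 := YDerase_card' hcc'
  have hcards : (YDerase (YDerase μ c hc) c'' hcc).card
      = (YDerase (YDerase μ c'' hc'') c hcc').card := by rw [hμν]
  have cTtop : T₀.cell μ.card = c := extSYT_cell_top hc _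
  have cUtop : U₀.cell μ.card = c'' := extSYT_cell_top hc'' _
  have cT1 : T₀.cell (μ.card - 1) = c'' := by
    rw [hT₀, show μ.card - 1 = (YDerase μ c hc).card from by omega,
      extSYT_cell_low hc _ (by omega) le_rfl, extSYT_cell_top hcc]
  have cU1 : U₀.cell (μ.card - 1) = c := by
    rw [hU₀, show μ.card - 1 = (YDerase μ c'' hc'').card from by omega,
      extSYT_cell_low hc'' _ (by omega) le_rfl, extSYT_cell_top hcc']
  have cT2 : T₀.cell (μ.card - 2) = d := by
    rw [hT₀, show μ.card - 2 = (YDerase (YDerase μ c hc) c'' hcc).card from by omega,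
      extSYT_cell_low hc _ (by omega) (by omega),
      extSYT_cell_low hcc _ (by omega) le_rfl, hX, extSYT_cell_top hd]
  have cTlow : ∀ x, 1 ≤ x → x ≤ μ.card - 2 → T₀.cell x = X.cell x := by
    intro x h1 h2
    rw [hT₀, extSYT_cell_low hc _ h1 (by omega), extSYT_cell_low hcc _ h1 (by omega)]
  have cUlow : ∀ x, 1 ≤ x → x ≤ μ.card - 2 → U₀.cell x = X.cell x := by
    intro x h1 h2
    rw [hU₀, extSYT_cell_low hc'' _ h1 (by omega),
      extSYT_cell_low hcc' _ h1 (by omega), cast_cell]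
  refine ⟨T₀, U₀, extSYT_topcell hc _, extSYT_topcell hc'' _, ?_⟩
  have hTU : T₀ ≠ U₀ := by
    intro h
    rw [h, cUtop] at cTtop
    exact hne cTtop.symm
  refine ⟨μ.card - 1, hTU, Or.inl ⟨by omega, by omega, Or.inr ⟨?_, ?_⟩⟩⟩
  · -- posBetween T₀ (μ.card-1) (μ.card-1-1) (μ.card-1+1)
    have e1 : μ.card - 1 - 1 = μ.card - 2 := by omega
    have e2 : μ.card - 1 + 1 = μ.card := by omega
    unfold posBetween
    rw [e1, e2, cT1, cT2, cTtop]
    exact Or.inl ⟨Or.inl hcd1, Or.inl hcd2⟩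
  · -- swapEq T₀ U₀ (μ.card - 1) (μ.card - 1 + 1)
    have e2 : μ.card - 1 + 1 = μ.card := by omega
    rw [e2]
    intro x hx1 hx2
    by_cases hxa : x = μ.card - 1
    · rw [if_pos hxa, hxa, cU1, cTtop]
    · by_cases hxb : x = μ.card
      · rw [if_neg hxa, if_pos hxb, hxb, cUtop, cT1]
      · rw [if_neg hxa, if_neg hxb, cUlow x hx1 (by omega), cTlow x hx1 (by omega)]

lemma moveTo {μ : YoungDiagram}
    (IH : ∀ ν : YoungDiagram, ν.card = μ.card - 1 → ∀ A B : SYT ν, Path ν A B) :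
    ∀ (k : ℕ) (c c' : ℕ × ℕ), IsCorner μ c → IsCorner μ c' → Nat.dist c.1 c'.1 ≤ k →
      ∀ T : SYT μ, topcell T = c → ∃ U : SYT μ, topcell U = c' ∧ Path μ T U := by
  classical
  intro k
  induction k with
  | zero =>
    intro c c' hc hc' hdist T htop
    have hrow : c.1 = c'.1 := by
      simp only [Nat.dist] at hdist
      omega
    exact ⟨T, by rw [htop, corner_row_inj hc hc' hrow], Relation.ReflTransGen.refl⟩
  | succ k ih =>
    intro c c' hc hc' hdist T htop
    have h0 : 0 < μ.card := Finset.card_pos.2 ⟨c, hc.1⟩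
    rcases Nat.lt_trichotomy c.1 c'.1 with hlt | heq | hgt
    · set F := μ.cells.filter (fun x => (c.1 < x.1 ∧ x.1 ≤ c'.1) ∧ IsCorner μ x) with hF
      have hFne : F.Nonempty := ⟨c', by
        simp only [hF, Finset.mem_filter]
        exact ⟨hc'.1, ⟨hlt, le_rfl⟩, hc'⟩⟩
      obtain ⟨c'', hc''F, hmin⟩ := Finset.exists_min_image F (fun x => x.1) hFne
      simp only [hF, Finset.mem_filter] at hc''F
      obtain ⟨-, ⟨hgt1, hle1⟩, hcorn⟩ := hc''F
      have hcons : ∀ e, IsCorner μ e → ¬(c.1 < e.1 ∧ e.1 < c''.1) := by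
        rintro e he ⟨h1, h2⟩
        have h4 := hmin e (by
          simp only [hF, Finset.mem_filter]
          exact ⟨he.1, ⟨h1, by omega⟩, he⟩)
        omega
      obtain ⟨T₀, U₀, hT₀, hU₀, hE⟩ := moveAdjPair hc hcorn hgt1 hcons
      have hp1 : Path μ T T₀ := sameTop h0 IH T T₀ (htop.trans hT₀.symm)
      obtain ⟨U, hU, hpath⟩ := ih c'' c' hcorn hc' (by
        simp only [Nat.dist] at hdist ⊢
        omega) U₀ hU₀
      exact ⟨U, hU, (hp1.trans (Relation.ReflTransGen.single hE)).trans hpath⟩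
    · exact ⟨T, by rw [htop, corner_row_inj hc hc' heq], Relation.ReflTransGen.refl⟩
    · set F := μ.cells.filter (fun x => (c'.1 ≤ x.1 ∧ x.1 < c.1) ∧ IsCorner μ x) with hF
      have hFne : F.Nonempty := ⟨c', by
        simp only [hF, Finset.mem_filter]
        exact ⟨hc'.1, ⟨le_rfl, hgt⟩, hc'⟩⟩
      obtain ⟨c'', hc''F, hmax⟩ := Finset.exists_max_image F (fun x => x.1) hFne
      simp only [hF, Finset.mem_filter] at hc''F
      obtain ⟨-, ⟨hge1, hlt1⟩, hcorn⟩ := hc''F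
      have hcons : ∀ e, IsCorner μ e → ¬(c''.1 < e.1 ∧ e.1 < c.1) := by
        rintro e he ⟨h1, h2⟩
        have h4 := hmax e (by
          simp only [hF, Finset.mem_filter]
          exact ⟨he.1, ⟨by omega, h2⟩, he⟩)
        omega
      obtain ⟨T₀, U₀, hT₀, hU₀, hE⟩ := moveAdjPair hcorn hc hlt1 hcons
      have hp1 : Path μ T U₀ := sameTop h0 IH T U₀ (htop.trans hU₀.symm)
      obtain ⟨U, hU, hpath⟩ := ih c'' c' hcorn hc' (by
        simp only [Nat.dist] at hdist ⊢
        omega) T₀ hT₀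
      exact ⟨U, hU, (hp1.trans (Relation.ReflTransGen.single (Erel_symm hE))).trans hpath⟩

/-- Connectivity of the dual equivalence moves on standard tableaux. -/
lemma conn : ∀ (m : ℕ) (μ : YoungDiagram), μ.card = m → ∀ T U : SYT μ, Path μ T U := by
  intro m
  induction m using Nat.strong_induction_on with
  | _ m IHm =>
    intro μ hm T U
    rcases Nat.eq_zero_or_pos μ.card with h0 | h0
    · have hTU : T = U := SYT.ext' (funext fun k => absurd k.isLt (by omega))
      rw [hTU]
      exact Relation.ReflTransGen.refl
    · have IH : ∀ ν : YoungDiagram, ν.card = μ.card - 1 → ∀ A B : SYT ν, Path ν A B := by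
        intro ν hν
        exact IHm (μ.card - 1) (by omega) ν hν
      have hcT := top_corner T h0
      have hcU := top_corner U h0
      obtain ⟨T₂, hT₂top, hpath⟩ := moveTo IH (Nat.dist (topcell T).1 (topcell U).1)
        (topcell T) (topcell U) hcT hcU le_rfl T rfl
      exact hpath.trans (sameTop h0 IH T₂ U hT₂top)

end Conn

section Fibers

lemma fiber_eq_of_edge (n : ℕ) (V : Type) [Finite V] (G : SCG V (n + 1) (n + 1))
    (h1 : G.Ax1) (lam : YoungDiagram) (hcard : lam.card = n + 1) (φ : V → SYT lam)
    (hφ : SCG.IsMorphism G (stdDEG (n + 1) lam hcard) φ)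
    {T U : SYT lam} (hE : Erel lam T U) :
    (φ ⁻¹' {T}).ncard = (φ ⁻¹' {U}).ncard := by
  classical
  obtain ⟨i, hne, hor⟩ := hE
  have key : ∀ A B : SYT lam, A ≠ B →
      (stdEdgeCore lam i A B ∨ stdEdgeCore lam i B A) →
      ∀ v, φ v = A → ∃ x, G.edge i v x ∧ φ x = B ∧ ∀ y, G.edge i v y → y = x := by
    intro A B hAB horAB v hv
    have hb := edge_bounds horAB
    have hb2 : i < n + 1 := by
      have := hb.2
      omega
    have hb1 := hb.1
    have hsgnA : sytSgn A (i - 1) = -sytSgn A i := edge_sgn horAB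
    have hs1 : G.sgn v (i - 1) = sytSgn A (i - 1) := by
      have h' := hφ.1 v (i - 1) (by omega) (by omega)
      rw [hv] at h'
      exact h'.symm
    have hs2 : G.sgn v i = sytSgn A i := by
      have h' := hφ.1 v i (by omega) (by omega)
      rw [hv] at h'
      exact h'.symm
    have hadm : G.sgn v (i - 1) = -G.sgn v i := by rw [hs1, hs2, hsgnA]
    obtain ⟨x, hx, huniq⟩ := (h1 i (by omega) (by omega) v).1 hadm
    have hedge : φ v ≠ φ x ∧
        (stdEdgeCore lam i (φ v) (φ x) ∨ stdEdgeCore lam i (φ x) (φ v)) :=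
      hφ.2 i v x hx
    rw [hv] at hedge
    have hBx : B = φ x := edge_det horAB hedge.2
    exact ⟨x, hx, hBx.symm, huniq⟩
  have keyTU := key T U hne hor
  have keyUT := key U T hne.symm hor.symm
  let f : ↥(φ ⁻¹' {T}) → ↥(φ ⁻¹' {U}) := fun v =>
    ⟨(keyTU v.1 v.2).choose, (keyTU v.1 v.2).choose_spec.2.1⟩
  let g : ↥(φ ⁻¹' {U}) → ↥(φ ⁻¹' {T}) := fun v =>
    ⟨(keyUT v.1 v.2).choose, (keyUT v.1 v.2).choose_spec.2.1⟩
  have hgf : ∀ v, g (f v) = v := by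
    intro v
    have spec1 := (keyTU v.1 v.2).choose_spec
    have spec2 := (keyUT (f v).1 (f v).2).choose_spec
    apply Subtype.ext
    exact (spec2.2.2 v.1 (G.edge_symm i v.1 _ spec1.1)).symm
  have hfg : ∀ v, f (g v) = v := by
    intro v
    have spec1 := (keyUT v.1 v.2).choose_spec
    have spec2 := (keyTU (g v).1 (g v).2).choose_spec
    apply Subtype.ext
    exact (spec2.2.2 v.1 (G.edge_symm i v.1 _ spec1.1)).symm
  have hcardeq : Nat.card ↥(φ ⁻¹' {T}) = Nat.card ↥(φ ⁻¹' {U}) :=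
    Nat.card_congr ⟨f, g, hgf, hfg⟩
  rw [← Nat.card_coe_set_eq, ← Nat.card_coe_set_eq]
  exact hcardeq

end Fibers





end DEGAux

end
/-- Let `G` be a connected signed colored graph of type
`(n+1,n+1)` satisfying dual equivalence axioms 1 through 5, with every
connected component of the `(n,n)`-restriction isomorphic to a standard dual
equivalence graph, and let `φ` be a morphism from `G` to `G_λ`, `λ ⊢ n+1`.
Then the fibers of `φ` over the vertices of `G_λ` all have the same
cardinality. -/
theorem statement6 (n : ℕ) (hn : 0 < n) (V : Type) [Finite V] (G : SCG V (n + 1) (n + 1))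
    (h1 : G.Ax1) (h2 : G.Ax2) (h3 : G.Ax3) (h4 : G.Ax4) (h5 : G.Ax5)
    (hconn : ∀ v w : V, G.Reach v w)
    (hcomp : ∀ v0 : V, ∃ (μ : YoungDiagram) (h : μ.card = n),
      SCG.Isomorphic ((G.restrict n n (by omega) (by omega)).component v0) (stdDEG n μ h))
    (lam : YoungDiagram) (hcard : lam.card = n + 1) (φ : V → SYT lam)
    (hφ : SCG.IsMorphism G (stdDEG (n + 1) lam hcard) φ) :
    ∀ T U : SYT lam, (φ ⁻¹' {T}).ncard = (φ ⁻¹' {U}).ncard := by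
  intro T U
  have hpath : DEGAux.Path lam T U := DEGAux.conn (n + 1) lam hcard T U
  induction hpath with
  | refl => rfl
  | tail hab hbc ih =>
    exact ih.trans (DEGAux.fiber_eq_of_edge n V G h1 lam hcard φ hφ hbc)
end

section
/- Let μ be a k-tuple of skew shapes with n cells in total, and let c and D be the content vector and k-descent set corresponding to μ, so that the map sending a k-tuple of semi-standard tableaux of shapes μ to the pair (content reading word, shifted content vector) is a bijection from SSYT_k(μ) onto the set WRib_k(c,D) of k-ribbon words with content vector c and k-descent set D. Then G̃^{(k)}_μ(x;q) = Σ_{(w,c) ∈ WRib_k(c,D)} q^{inv_k(w,c)} x^w = Σ q^{inv_k(w,c)} Q_{σ(w)}(x), where the last sum is over the standard k-ribbon words (w,c) ∈ WRib_k(c,D) (those for which w is a permutation of {1,…,n}), x^w = x_1^{π_1}x_2^{π_2}⋯ when w has π_j letters equal to j, and σ(w)_i = +1 if i appears to the left of i+1 in w and −1 otherwise. -/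
open scoped Classical

namespace St16

open Set

/-- Rectangle lemma for skew shapes. -/
lemma skew_rect {S : Finset (ℕ × ℕ)} (hS : IsSkewShape S) {r c r' c' a b : ℕ}
    (h1 : (r, c) ∈ S) (h2 : (r', c') ∈ S) (har : r ≤ a) (har' : a ≤ r')
    (hbc : c ≤ b) (hbc' : b ≤ c') : (a, b) ∈ S := by
  obtain ⟨lam, nu, -, rfl⟩ := hS
  simp only [Finset.mem_sdiff, YoungDiagram.mem_cells] at *
  exact ⟨lam.up_left_mem har' hbc' h2.1, fun hab => h1.2 (nu.up_left_mem har hbc hab)⟩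

lemma shifted_sub_keq {k : ℕ} (hk : 0 < k) {i j : Fin k} {x y : ℕ × ℕ} {m : ℤ}
    (h : shiftedContent k (j, y) - shiftedContent k (i, x) = (k : ℤ) * m) :
    i = j ∧ cellContent y = cellContent x + m := by
  have hi : ((i : ℕ) : ℤ) < k := by exact_mod_cast i.isLt
  have hj : ((j : ℕ) : ℤ) < k := by exact_mod_cast j.isLt
  have hi0 : (0:ℤ) ≤ ((i : ℕ) : ℤ) := Int.natCast_nonneg _
  have hj0 : (0:ℤ) ≤ ((j : ℕ) : ℤ) := Int.natCast_nonneg _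
  have hk0 : (0:ℤ) < k := by exact_mod_cast hk
  simp only [shiftedContent] at h
  have key : (k:ℤ) * (cellContent y - cellContent x - m) = ((i : ℕ) : ℤ) - j := by
    ring_nf
    ring_nf at h
    linarith
  have hdvd : (k:ℤ) ∣ (((i : ℕ) : ℤ) - j) := ⟨_, key.symm⟩
  have hz : ((i : ℕ) : ℤ) - j = 0 :=
    Int.eq_zero_of_abs_lt_dvd hdvd (abs_lt.2 ⟨by linarith, by linarith⟩)
  have hij : i = j := by
    apply Fin.ext
    exact_mod_cast sub_eq_zero.mp hz
  refine ⟨hij, ?_⟩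
  rw [hz] at key
  have := mul_eq_zero.mp key
  rcases this with h' | h'
  · exact absurd h' (by positivity)
  · linarith

section Enum

variable {k n : ℕ} {S : Fin k → Finset (ℕ × ℕ)} {e : ℕ → Fin k × ℕ × ℕ} {c : ℕ → ℤ}

/-- positions in range map to cells of the shapes -/
lemma enum_mem (he : IsCellEnum k n S e) {p : ℕ} (hp : p ∈ Set.Icc 1 n) :
    (e p).2 ∈ S (e p).1 := he.1.mapsTo hp

lemma c_mono (he : IsCellEnum k n S e)
    (hc : ∀ p ∈ Set.Icc 1 n, c p = shiftedContent k (e p))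
    {p q : ℕ} (hp : p ∈ Set.Icc 1 n) (hq : q ∈ Set.Icc 1 n) (hpq : p ≤ q) :
    c p ≤ c q := by
  rcases eq_or_lt_of_le hpq with rfl | hlt
  · exact le_refl _
  · rw [hc p hp, hc q hq]
    rcases he.2 p q hp hq hlt with h | h
    · exact le_of_lt h
    · exact le_of_eq h.1

/-- If `c p < c q` then `p < q`. -/
lemma lt_of_c_lt (he : IsCellEnum k n S e)
    (hc : ∀ p ∈ Set.Icc 1 n, c p = shiftedContent k (e p))
    {p q : ℕ} (hp : p ∈ Set.Icc 1 n) (hq : q ∈ Set.Icc 1 n) (hcc : c p < c q) :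
    p < q := by
  by_contra hle
  exact absurd (c_mono he hc hq hp (by omega)) (by omega)

/-- Canonical preimage of a cell. -/
noncomputable def einv (n : ℕ) {k : ℕ} (e : ℕ → Fin k × ℕ × ℕ) (ix : Fin k × ℕ × ℕ) : ℕ :=
  Function.invFunOn e (Set.Icc 1 n) ix

lemma einv_mem (he : IsCellEnum k n S e) {ix : Fin k × ℕ × ℕ} (hix : ix.2 ∈ S ix.1) :
    einv n e ix ∈ Set.Icc 1 n := by
  obtain ⟨p, hp, hep⟩ := he.1.surjOn hix
  exact Function.invFunOn_mem ⟨p, hp, hep⟩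

lemma einv_apply (he : IsCellEnum k n S e) {ix : Fin k × ℕ × ℕ} (hix : ix.2 ∈ S ix.1) :
    e (einv n e ix) = ix := by
  obtain ⟨p, hp, hep⟩ := he.1.surjOn hix
  exact Function.invFunOn_eq ⟨p, hp, hep⟩

lemma einv_e (he : IsCellEnum k n S e) {p : ℕ} (hp : p ∈ Set.Icc 1 n) :
    einv n e (e p) = p := by
  have h1 := einv_mem he (enum_mem he hp)
  have h2 := einv_apply he (enum_mem he hp)
  exact he.1.injOn h1 hp h2

lemma einv_mem' (he : IsCellEnum k n S e) {i : Fin k} {x : ℕ × ℕ} (hx : x ∈ S i) :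
    einv n e (i, x) ∈ Set.Icc 1 n := einv_mem he hx

lemma einv_apply' (he : IsCellEnum k n S e) {i : Fin k} {x : ℕ × ℕ} (hx : x ∈ S i) :
    e (einv n e (i, x)) = (i, x) := einv_apply he hx

end Enum

end St16
namespace St16
open Set

section Tableaux

variable {k n : ℕ} {S : Fin k → Finset (ℕ × ℕ)} {e : ℕ → Fin k × ℕ × ℕ} {c : ℕ → ℤ}

lemma semistd_le {S : Finset (ℕ × ℕ)} (hS : IsSkewShape S) {T : ℕ × ℕ → ℕ}
    (hT : SemistdOn S T) {r cc r' cc' : ℕ} (h1 : (r, cc) ∈ S) (h2 : (r', cc') ∈ S)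
    (hr : r ≤ r') (hcc : cc ≤ cc') : T (r, cc) ≤ T (r', cc') := by
  have hmid : (r, cc') ∈ S := skew_rect hS h1 h2 le_rfl hr hcc le_rfl
  have step1 : T (r, cc) ≤ T (r, cc') := hT.2.2.1 r cc cc' h1 hmid hcc
  rcases eq_or_lt_of_le hr with rfl | hlt
  · exact step1
  · exact le_of_lt (lt_of_le_of_lt step1 (hT.2.2.2 r r' cc' hmid h2 hlt))

lemma semistd_lt {S : Finset (ℕ × ℕ)} (hS : IsSkewShape S) {T : ℕ × ℕ → ℕ}
    (hT : SemistdOn S T) {r cc r' cc' : ℕ} (h1 : (r, cc) ∈ S) (h2 : (r', cc') ∈ S)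
    (hr : r < r') (hcc : cc ≤ cc') : T (r, cc) < T (r', cc') := by
  have hmid : (r, cc') ∈ S := skew_rect hS h1 h2 le_rfl (le_of_lt hr) hcc le_rfl
  exact lt_of_le_of_lt (hT.2.2.1 r cc cc' h1 hmid hcc) (hT.2.2.2 r r' cc' hmid h2 hr)

lemma readWord_apply {T : Fin k → ℕ × ℕ → ℕ} {p : ℕ} (hp : p ∈ Set.Icc 1 n) :
    readWord n e T p = T (e p).1 (e p).2 := if_pos hp

lemma readWord_pos (he : IsCellEnum k n S e) {T : Fin k → ℕ × ℕ → ℕ}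
    (hT : SemistdTuple S T) : IsPosWord n (readWord n e T) := by
  constructor
  · intro p hp
    rw [readWord_apply hp]
    exact (hT _).1 _ (enum_mem he hp)
  · intro p hp
    exact if_neg hp

lemma readWord_ribbon (hk : 0 < k) (hS : ∀ i, IsSkewShape (S i)) (he : IsCellEnum k n S e)
    (hc : ∀ p ∈ Set.Icc 1 n, c p = shiftedContent k (e p))
    {T : Fin k → ℕ × ℕ → ℕ} (hT : SemistdTuple S T) :
    IsRibbonWord k n (readWord n e T) c := by
  intro p hp1 hpn hcp
  have hp : p ∈ Set.Icc 1 n := ⟨hp1, by omega⟩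
  have hp' : p + 1 ∈ Set.Icc 1 n := ⟨by omega, hpn⟩
  rcases hx : e p with ⟨i, rx, cx⟩
  rcases hy : e (p + 1) with ⟨j, ry, cy⟩
  have hsft : shiftedContent k (j, (ry, cy)) - shiftedContent k (i, (rx, cx)) = (k : ℤ) * 0 := by
    rw [← hx, ← hy, ← hc p hp, ← hc (p+1) hp', hcp]; ring
  obtain ⟨rfl, hcont⟩ := shifted_sub_keq hk hsft
  rw [add_zero] at hcont
  have hcol : cx < cy := by
    rcases he.2 p (p+1) hp hp' (by omega) with h | h
    · exfalso
      rw [hx, hy] at h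
      rw [mul_zero] at hsft
      exact absurd hsft (by omega)
    · rw [hx, hy] at h
      exact h.2
  have hrow : rx < ry := by
    simp only [cellContent] at hcont
    omega
  have hx2 : (rx, cx) ∈ S i := by have := enum_mem he hp; rw [hx] at this; exact this
  have hy2 : (ry, cy) ∈ S i := by have := enum_mem he hp'; rw [hy] at this; exact this
  have hcont' : (cy : ℤ) - ry = (cx : ℤ) - rx := by
    simp only [cellContent] at hcont; exact hcont
  constructor
  · -- the h cell
    have hcell : (ry, cy - 1) ∈ S i :=
      skew_rect (hS i) hx2 hy2 (by omega) le_rfl (by omega) (by omega)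
    refine ⟨einv n e (i, ry, cy - 1), einv_mem he hcell, ?_, ?_, ?_⟩
    · rw [hc _ (einv_mem he hcell), einv_apply he hcell, hc p hp, hx]
      simp only [shiftedContent, cellContent]
      have hcy1 : ((cy - 1 : ℕ) : ℤ) = (cy : ℤ) - 1 := by omega
      rw [hcy1]
      linear_combination (k : ℤ) * hcont'
    · rw [readWord_apply hp, readWord_apply (einv_mem he hcell), hx,
        einv_apply he hcell]
      exact semistd_lt (hS i) (hT i) hx2 hcell hrow (by omega)
    · rw [readWord_apply hp', readWord_apply (einv_mem he hcell), hy,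
        einv_apply he hcell]
      exact semistd_le (hS i) (hT i) hcell hy2 le_rfl (by omega)
  · -- the j cell
    have hcell : (rx, cx + 1) ∈ S i :=
      skew_rect (hS i) hx2 hy2 le_rfl (by omega) (by omega) (by omega)
    refine ⟨einv n e (i, rx, cx + 1), einv_mem he hcell, ?_, ?_, ?_⟩
    · rw [hc _ (einv_mem he hcell), einv_apply he hcell, hc p hp, hx]
      simp only [shiftedContent, cellContent]
      push_cast
      ring
    · rw [readWord_apply hp, readWord_apply (einv_mem he hcell), hx,
        einv_apply he hcell]
      exact semistd_le (hS i) (hT i) hx2 hcell le_rfl (by omega)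
    · rw [readWord_apply hp', readWord_apply (einv_mem he hcell), hy,
        einv_apply he hcell]
      exact semistd_lt (hS i) (hT i) hcell hy2 hrow (by omega)

end Tableaux
end St16
namespace St16
open Set

section Surj

variable {k n : ℕ} {S : Fin k → Finset (ℕ × ℕ)} {e : ℕ → Fin k × ℕ × ℕ} {c : ℕ → ℤ}

/-- The reference tableau: each cell is filled with its row index plus one. -/
def refT (S : Fin k → Finset (ℕ × ℕ)) : Fin k → ℕ × ℕ → ℕ :=
  fun i x => if x ∈ S i then x.1 + 1 else 0

lemma refT_semistd : SemistdTuple S (refT S) := by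
  intro i
  refine ⟨fun x hx => by simp [refT, hx], fun x hx => by simp [refT, hx],
    fun r c1 c2 h1 h2 _ => by simp [refT, h1, h2], fun r1 r2 cc h1 h2 h => by
      simp only [refT, if_pos h1, if_pos h2]; omega⟩

lemma readWord_injective (he : IsCellEnum k n S e) {T T' : Fin k → ℕ × ℕ → ℕ}
    (hT : SemistdTuple S T) (hT' : SemistdTuple S T')
    (h : readWord n e T = readWord n e T') : T = T' := by
  funext i x
  by_cases hx : x ∈ S i
  · have hm := einv_mem he (show ((i, x) : Fin k × ℕ × ℕ).2 ∈ S (i, x).1 from hx)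
    have h2 := congrFun h (einv n e (i, x))
    rw [readWord_apply hm, readWord_apply hm, einv_apply he hx] at h2
    exact h2
  · rw [(hT i).2.1 x hx, (hT' i).2.1 x hx]

/-- Tableau reconstructed from a word. -/
noncomputable def wordT (n : ℕ) {k : ℕ} (S : Fin k → Finset (ℕ × ℕ))
    (e : ℕ → Fin k × ℕ × ℕ) (w : ℕ → ℕ) : Fin k → ℕ × ℕ → ℕ :=
  fun i x => if x ∈ S i then w (einv n e (i, x)) else 0

lemma wordT_readWord (he : IsCellEnum k n S e) {w : ℕ → ℕ} (hw : IsPosWord n w) :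
    readWord n e (wordT n S e w) = w := by
  funext p
  by_cases hp : p ∈ Set.Icc 1 n
  · rw [readWord_apply hp]
    have hm := enum_mem he hp
    simp only [wordT, if_pos hm]
    congr 1
    have h0 : ((e p).1, (e p).2) = e p := rfl
    rw [h0, einv_e he hp]
  · rw [show readWord n e (wordT n S e w) p = 0 from if_neg hp, hw.2 p hp]

/-- Forced weak increase along rows, from the fixed descent set. -/
lemma word_row_le (hk : 0 < k) (he : IsCellEnum k n S e)
    (hc : ∀ p ∈ Set.Icc 1 n, c p = shiftedContent k (e p))
    {w : ℕ → ℕ} (hDes : DesK k n w c = DesK k n (readWord n e (refT S)) c)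
    {i : Fin k} {r cc : ℕ} (h1 : (r, cc) ∈ S i) (h2 : (r, cc + 1) ∈ S i) :
    w (einv n e (i, (r, cc))) ≤ w (einv n e (i, (r, cc + 1))) := by
  have hp : einv n e (i, (r, cc)) ∈ Set.Icc 1 n := einv_mem he h1
  have hq : einv n e (i, (r, cc + 1)) ∈ Set.Icc 1 n := einv_mem he h2
  have hdiff : c (einv n e (i, (r, cc + 1))) - c (einv n e (i, (r, cc))) = (k : ℤ) := by
    rw [hc _ hp, hc _ hq, einv_apply' he h1, einv_apply' he h2]
    simp only [shiftedContent, cellContent]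
    push_cast; ring
  by_contra hlt
  have hmem : (einv n e (i, (r, cc)), einv n e (i, (r, cc + 1))) ∈ DesK k n w c := by
    refine ⟨hp, hq, ?_, hdiff⟩
    simp only
    omega
  rw [hDes] at hmem
  have hww : readWord n e (refT S) (einv n e (i, (r, cc + 1)))
      < readWord n e (refT S) (einv n e (i, (r, cc))) := hmem.2.2.1
  rw [readWord_apply hp, readWord_apply hq, einv_apply' he h1, einv_apply' he h2] at hww
  simp only [refT, if_pos h1, if_pos h2] at hww
  omega

/-- Forced strict increase along columns, from the fixed descent set. -/
lemma word_col_lt (hk : 0 < k) (he : IsCellEnum k n S e)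
    (hc : ∀ p ∈ Set.Icc 1 n, c p = shiftedContent k (e p))
    {w : ℕ → ℕ} (hDes : DesK k n w c = DesK k n (readWord n e (refT S)) c)
    {i : Fin k} {r cc : ℕ} (h1 : (r, cc) ∈ S i) (h2 : (r + 1, cc) ∈ S i) :
    w (einv n e (i, (r, cc))) < w (einv n e (i, (r + 1, cc))) := by
  have hp : einv n e (i, (r + 1, cc)) ∈ Set.Icc 1 n := einv_mem he h2
  have hq : einv n e (i, (r, cc)) ∈ Set.Icc 1 n := einv_mem he h1
  have hdiff : c (einv n e (i, (r, cc))) - c (einv n e (i, (r + 1, cc))) = (k : ℤ) := by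
    rw [hc _ hp, hc _ hq, einv_apply' he h1, einv_apply' he h2]
    simp only [shiftedContent, cellContent]
    push_cast; ring
  have hmem : (einv n e (i, (r + 1, cc)), einv n e (i, (r, cc)))
      ∈ DesK k n (readWord n e (refT S)) c := by
    refine ⟨hp, hq, ?_, hdiff⟩
    simp only
    rw [readWord_apply hp, readWord_apply hq, einv_apply' he h1, einv_apply' he h2]
    simp only [refT, if_pos h1, if_pos h2]
    omega
  rw [← hDes] at hmem
  exact hmem.2.2.1

lemma wordT_semistd (hk : 0 < k) (hS : ∀ i, IsSkewShape (S i)) (he : IsCellEnum k n S e)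
    (hc : ∀ p ∈ Set.Icc 1 n, c p = shiftedContent k (e p))
    {w : ℕ → ℕ} (hw : IsPosWord n w)
    (hDes : DesK k n w c = DesK k n (readWord n e (refT S)) c) :
    SemistdTuple S (wordT n S e w) := by
  intro i
  refine ⟨fun x hx => ?_, fun x hx => by simp [wordT, hx], ?_, ?_⟩
  · simp only [wordT, if_pos hx]
    exact hw.1 _ (einv_mem he hx)
  · intro r c1 c2 h1 h2 hle
    obtain ⟨d, rfl⟩ : ∃ d, c2 = c1 + d := ⟨c2 - c1, by omega⟩
    clear hle
    induction d with
    | zero => exact le_refl _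
    | succ d ih =>
      have h2' : (r, c1 + d + 1) ∈ S i := by convert h2 using 2 <;> omega
      have hmid : (r, c1 + d) ∈ S i :=
        skew_rect (hS i) h1 h2 le_rfl le_rfl (by omega) (by omega)
      refine le_trans (ih hmid) ?_
      have hstep := word_row_le hk he hc hDes hmid h2'
      simp only [wordT, if_pos hmid, if_pos h2']
      have heq : (r, c1 + (d + 1)) = (r, c1 + d + 1) := rfl
      rw [heq, if_pos h2']
      exact hstep
  · intro r1 r2 cc h1 h2 hlt
    obtain ⟨d, rfl⟩ : ∃ d, r2 = r1 + 1 + d := ⟨r2 - r1 - 1, by omega⟩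
    clear hlt
    induction d with
    | zero =>
      have hstep := word_col_lt hk he hc hDes h1 (show (r1 + 1, cc) ∈ S i from h2)
      simp only [wordT, if_pos h1, if_pos (show (r1 + 1 + 0, cc) ∈ S i from h2)]
      exact hstep
    | succ d ih =>
      have h2' : (r1 + 1 + d + 1, cc) ∈ S i := by convert h2 using 2 <;> omega
      have hmid : (r1 + 1 + d, cc) ∈ S i :=
        skew_rect (hS i) h1 h2 (by omega) (by omega) le_rfl le_rfl
      refine lt_trans (ih hmid) ?_
      have hstep := word_col_lt hk he hc hDes hmid h2'
      have heq : (r1 + 1 + (d + 1), cc) = (r1 + 1 + d + 1, cc) := rfl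
      simp only [wordT, if_pos hmid]
      rw [heq, if_pos h2']
      exact hstep

end Surj
end St16
namespace St16
open Set

section Transfer

variable {k n : ℕ} {S : Fin k → Finset (ℕ × ℕ)} {e : ℕ → Fin k × ℕ × ℕ} {c : ℕ → ℤ}

lemma weight_transfer (he : IsCellEnum k n S e) (T : Fin k → ℕ × ℕ → ℕ) :
    tupleWeight S T = wordWeight n (readWord n e T) := by
  unfold tupleWeight wordWeight
  rw [Finset.sum_sigma' Finset.univ (fun i => S i)
    (fun i x => Finsupp.single (T i x - 1) 1)]
  refine Finset.sum_nbij' (fun q => einv n e (q.1, q.2))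
    (fun p => ⟨(e p).1, (e p).2⟩) ?_ ?_ ?_ ?_ ?_
  · intro q hq
    rw [Finset.mem_sigma] at hq
    exact Finset.mem_Icc.2 (einv_mem' he hq.2)
  · intro p hp
    rw [Finset.mem_sigma]
    exact ⟨Finset.mem_univ _, enum_mem he (Finset.mem_Icc.1 hp)⟩
  · intro q hq
    rw [Finset.mem_sigma] at hq
    have h := einv_apply' he hq.2
    show (⟨(e (einv n e (q.1, q.2))).1, (e (einv n e (q.1, q.2))).2⟩ :
      (_ : Fin k) × ℕ × ℕ) = q
    rw [h]
  · intro p hp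
    show einv n e ((e p).1, (e p).2) = p
    exact einv_e he (Finset.mem_Icc.1 hp)
  · intro q hq
    rw [Finset.mem_sigma] at hq
    rw [readWord_apply (einv_mem' he hq.2), einv_apply' he hq.2]

lemma inv_transfer (he : IsCellEnum k n S e)
    (hc : ∀ p ∈ Set.Icc 1 n, c p = shiftedContent k (e p)) (T : Fin k → ℕ × ℕ → ℕ) :
    invkTuple k S T = invK k n (readWord n e T) c := by
  have himg : (fun pq : ℕ × ℕ => (e pq.1, e pq.2)) '' InvK k n (readWord n e T) c
      = {p : (Fin k × ℕ × ℕ) × (Fin k × ℕ × ℕ) |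
          p.1.2 ∈ S p.1.1 ∧ p.2.2 ∈ S p.2.1 ∧
          0 < shiftedContent k p.2 - shiftedContent k p.1 ∧
          shiftedContent k p.2 - shiftedContent k p.1 < (k : ℤ) ∧
          T p.2.1 p.2.2 < T p.1.1 p.1.2} := by
    ext ab
    constructor
    · rintro ⟨⟨p, q⟩, ⟨hp, hq, hw, h0, hkk⟩, rfl⟩
      rw [readWord_apply hp, readWord_apply hq] at hw
      rw [hc p hp, hc q hq] at h0 hkk
      exact ⟨enum_mem he hp, enum_mem he hq, h0, hkk, hw⟩
    · rintro ⟨ha, hb, h0, hkk, hT⟩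
      refine ⟨(einv n e ab.1, einv n e ab.2),
        ⟨einv_mem he ha, einv_mem he hb, ?_, ?_, ?_⟩, ?_⟩
      · rw [readWord_apply (einv_mem he ha), readWord_apply (einv_mem he hb),
          einv_apply he ha, einv_apply he hb]
        exact hT
      · rw [hc _ (einv_mem he ha), hc _ (einv_mem he hb),
          einv_apply he ha, einv_apply he hb]
        exact h0
      · rw [hc _ (einv_mem he ha), hc _ (einv_mem he hb),
          einv_apply he ha, einv_apply he hb]
        exact hkk
      · show (e (einv n e ab.1), e (einv n e ab.2)) = ab
        rw [einv_apply he ha, einv_apply he hb]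
  have hinj : Set.InjOn (fun pq : ℕ × ℕ => (e pq.1, e pq.2))
      (InvK k n (readWord n e T) c) := by
    intro x hx y hy hxy
    simp only [Prod.mk.injEq] at hxy
    have h1 := he.1.injOn hx.1 hy.1 hxy.1
    have h2 := he.1.injOn hx.2.1 hy.2.1 hxy.2
    exact Prod.ext h1 h2
  unfold invkTuple invK
  rw [← himg, Set.ncard_image_of_injOn hinj]

end Transfer
end St16
namespace St16
open Set

section Part1

variable {k n : ℕ} {S : Fin k → Finset (ℕ × ℕ)} {e : ℕ → Fin k × ℕ × ℕ} {c : ℕ → ℤ}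
  {D : Set (ℕ × ℕ)}

lemma part1 (hk : 0 < k) (hS : ∀ i, IsSkewShape (S i)) (he : IsCellEnum k n S e)
    (hc : ∀ p ∈ Set.Icc 1 n, c p = shiftedContent k (e p))
    (hD : ∀ T : Fin k → ℕ × ℕ → ℕ, SemistdTuple S T → DesK k n (readWord n e T) c = D) :
    LLTpoly k S = ribbonWordGF k n c D := by
  funext d
  show (∑ᶠ T : {T : Fin k → ℕ × ℕ → ℕ // SemistdTuple S T ∧ tupleWeight S T = d},
      (Polynomial.X : Polynomial ℤ) ^ invkTuple k S T.1)
    = ∑ᶠ w : {w : ℕ → ℕ // IsPosWord n w ∧ IsRibbonWord k n w c ∧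
      DesK k n w c = D ∧ wordWeight n w = d},
      (Polynomial.X : Polynomial ℤ) ^ invK k n w.1 c
  have hrefD : DesK k n (readWord n e (refT S)) c = D := hD _ refT_semistd
  refine finsum_eq_of_bijective
    (fun T => ⟨readWord n e T.1, readWord_pos he T.2.1,
      readWord_ribbon hk hS he hc T.2.1, hD T.1 T.2.1,
      (weight_transfer he T.1) ▸ T.2.2⟩) ⟨?_, ?_⟩ ?_
  · intro T T' h
    have := congrArg Subtype.val h
    exact Subtype.ext (readWord_injective he T.2.1 T'.2.1 this)
  · rintro ⟨w, hw1, hw2, hw3, hw4⟩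
    have hDes : DesK k n w c = DesK k n (readWord n e (refT S)) c := by
      rw [hw3, hrefD]
    have hsem : SemistdTuple S (wordT n S e w) := wordT_semistd hk hS he hc hw1 hDes
    have hread : readWord n e (wordT n S e w) = w := wordT_readWord he hw1
    refine ⟨⟨wordT n S e w, hsem, ?_⟩, ?_⟩
    · rw [weight_transfer he, hread, hw4]
    · exact Subtype.ext hread
  · intro T
    rw [inv_transfer he hc T.1]

end Part1
end St16
namespace St16
open Set

section Stdz

variable {n : ℕ} {u w : ℕ → ℕ}

/-- Standardization of a word: rank in the lexicographic order (value, position). -/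
noncomputable def stdz (n : ℕ) (u : ℕ → ℕ) : ℕ → ℕ := fun p =>
  if p ∈ Set.Icc 1 n then
    ((Finset.Icc 1 n).filter (fun q => u q < u p ∨ (u q = u p ∧ q ≤ p))).card
  else 0

lemma stdz_filter_subset {p q : ℕ} (hq : q ∈ Finset.Icc 1 n)
    (h : u p < u q ∨ (u p = u q ∧ p ≤ q)) :
    (Finset.Icc 1 n).filter (fun r => u r < u p ∨ (u r = u p ∧ r ≤ p)) ⊆
    (Finset.Icc 1 n).filter (fun r => u r < u q ∨ (u r = u q ∧ r ≤ q)) := by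
  intro r hr
  simp only [Finset.mem_filter] at hr ⊢
  exact ⟨hr.1, by omega⟩

lemma stdz_apply {p : ℕ} (hp : p ∈ Set.Icc 1 n) :
    stdz n u p =
    ((Finset.Icc 1 n).filter (fun q => u q < u p ∨ (u q = u p ∧ q ≤ p))).card :=
  if_pos hp

lemma mem_Icc_finset {p : ℕ} (hp : p ∈ Set.Icc 1 n) : p ∈ Finset.Icc 1 n :=
  Finset.mem_Icc.2 hp

lemma stdz_lt_iff {p q : ℕ} (hp : p ∈ Set.Icc 1 n) (hq : q ∈ Set.Icc 1 n) :
    stdz n u p < stdz n u q ↔ (u p < u q ∨ (u p = u q ∧ p < q)) := by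
  rw [stdz_apply hp, stdz_apply hq]
  constructor
  · intro hcard
    by_contra hcon
    have h' : u q < u p ∨ (u q = u p ∧ q ≤ p) := by omega
    have := Finset.card_le_card (stdz_filter_subset (mem_Icc_finset hp) h')
    omega
  · intro h
    refine Finset.card_lt_card ⟨stdz_filter_subset (mem_Icc_finset hq) (by omega), ?_⟩
    intro hsub
    have hqmem : q ∈ (Finset.Icc 1 n).filter
        (fun r => u r < u q ∨ (u r = u q ∧ r ≤ q)) := by
      simp only [Finset.mem_filter]
      exact ⟨mem_Icc_finset hq, Or.inr ⟨trivial, le_rfl⟩⟩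
    have := hsub hqmem
    simp only [Finset.mem_filter] at this
    omega

lemma stdz_pos {p : ℕ} (hp : p ∈ Set.Icc 1 n) : 1 ≤ stdz n u p := by
  rw [stdz_apply hp]
  refine Finset.card_pos.2 ⟨p, ?_⟩
  simp only [Finset.mem_filter]
  exact ⟨mem_Icc_finset hp, Or.inr ⟨trivial, le_rfl⟩⟩

lemma stdz_le {p : ℕ} (hp : p ∈ Set.Icc 1 n) : stdz n u p ≤ n := by
  rw [stdz_apply hp]
  have := Finset.card_le_card (Finset.filter_subset
    (fun q => u q < u p ∨ (u q = u p ∧ q ≤ p)) (Finset.Icc 1 n))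
  simpa [Nat.card_Icc] using this

lemma stdz_injOn : Set.InjOn (stdz n u) (Set.Icc 1 n) := by
  intro p hp q hq h
  by_contra hne
  rcases Nat.lt_or_ge p q with hpq | hge
  · rcases Nat.lt_trichotomy (u p) (u q) with h1 | h1 | h1
    · exact absurd ((stdz_lt_iff hp hq).2 (Or.inl h1)) (by omega)
    · exact absurd ((stdz_lt_iff hp hq).2 (Or.inr ⟨h1, hpq⟩)) (by omega)
    · exact absurd ((stdz_lt_iff hq hp).2 (Or.inl h1)) (by omega)
  · have hqp : q < p := by omega
    rcases Nat.lt_trichotomy (u p) (u q) with h1 | h1 | h1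
    · exact absurd ((stdz_lt_iff hp hq).2 (Or.inl h1)) (by omega)
    · exact absurd ((stdz_lt_iff hq hp).2 (Or.inr ⟨h1.symm, hqp⟩)) (by omega)
    · exact absurd ((stdz_lt_iff hq hp).2 (Or.inl h1)) (by omega)

lemma stdz_isStd (n : ℕ) (u : ℕ → ℕ) : IsStdWord n (stdz n u) := by
  have hmaps : Set.MapsTo (stdz n u) (Set.Icc 1 n) (Set.Icc 1 n) :=
    fun p hp => ⟨stdz_pos hp, stdz_le hp⟩
  have himg : Finset.image (stdz n u) (Finset.Icc 1 n) = Finset.Icc 1 n := by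
    apply Finset.eq_of_subset_of_card_le
    · intro b hb
      obtain ⟨a, ha, rfl⟩ := Finset.mem_image.1 hb
      exact mem_Icc_finset (hmaps (Finset.mem_Icc.1 ha))
    · rw [Finset.card_image_of_injOn (fun a ha b hb h =>
        stdz_injOn (Finset.mem_Icc.1 ha) (Finset.mem_Icc.1 hb) h)]
  refine ⟨⟨hmaps, stdz_injOn, ?_⟩, fun p hp => if_neg hp⟩
  intro b hb
  have : b ∈ Finset.image (stdz n u) (Finset.Icc 1 n) := by
    rw [himg]; exact mem_Icc_finset hb
  obtain ⟨a, ha, hab⟩ := Finset.mem_image.1 this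
  exact ⟨a, Finset.mem_Icc.1 ha, hab⟩

/-- For `p < q`: the standardization inverts exactly when the word does. -/
lemma stdz_lt_iff' {p q : ℕ} (hp : p ∈ Set.Icc 1 n) (hq : q ∈ Set.Icc 1 n)
    (hpq : p < q) : stdz n u q < stdz n u p ↔ u q < u p := by
  rw [stdz_lt_iff hq hp]
  omega

lemma stdz_le_iff' {p q : ℕ} (hp : p ∈ Set.Icc 1 n) (hq : q ∈ Set.Icc 1 n)
    (hpq : p < q) : stdz n u p < stdz n u q ↔ u p ≤ u q := by
  rw [stdz_lt_iff hp hq]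
  omega

/-- Position of a letter in a standard word. -/
noncomputable def pw (n : ℕ) (w : ℕ → ℕ) (ℓ : ℕ) : ℕ :=
  Function.invFunOn w (Set.Icc 1 n) ℓ

lemma pw_mem (hw : IsStdWord n w) {ℓ : ℕ} (hl : ℓ ∈ Set.Icc 1 n) :
    pw n w ℓ ∈ Set.Icc 1 n := by
  obtain ⟨p, hp, hep⟩ := hw.1.surjOn hl
  exact Function.invFunOn_mem ⟨p, hp, hep⟩

lemma pw_apply (hw : IsStdWord n w) {ℓ : ℕ} (hl : ℓ ∈ Set.Icc 1 n) :
    w (pw n w ℓ) = ℓ := by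
  obtain ⟨p, hp, hep⟩ := hw.1.surjOn hl
  exact Function.invFunOn_eq ⟨p, hp, hep⟩

lemma pw_w (hw : IsStdWord n w) {p : ℕ} (hp : p ∈ Set.Icc 1 n) :
    pw n w (w p) = p :=
  hw.1.2.1 (pw_mem hw (hw.1.mapsTo hp)) hp (pw_apply hw (hw.1.mapsTo hp))

end Stdz
end St16
namespace St16
open Set

section StdzPres

variable {k n : ℕ} {u : ℕ → ℕ} {c : ℕ → ℤ}

/-- `c` strictly reflects positions. -/
def CMono (n : ℕ) (c : ℕ → ℤ) : Prop :=
  ∀ p q, p ∈ Set.Icc 1 n → q ∈ Set.Icc 1 n → c p < c q → p < q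

lemma stdz_DesK (hk : 0 < k) (hcm : CMono n c) :
    DesK k n (stdz n u) c = DesK k n u c := by
  ext pq
  constructor
  · rintro ⟨hp, hq, hv, hd⟩
    have hpq : pq.1 < pq.2 := hcm pq.1 pq.2 hp hq (by omega)
    exact ⟨hp, hq, (stdz_lt_iff' hp hq hpq).1 hv, hd⟩
  · rintro ⟨hp, hq, hv, hd⟩
    have hpq : pq.1 < pq.2 := hcm pq.1 pq.2 hp hq (by omega)
    exact ⟨hp, hq, (stdz_lt_iff' hp hq hpq).2 hv, hd⟩

lemma stdz_InvK (hcm : CMono n c) :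
    InvK k n (stdz n u) c = InvK k n u c := by
  ext pq
  constructor
  · rintro ⟨hp, hq, hv, hd0, hdk⟩
    have hpq : pq.1 < pq.2 := hcm pq.1 pq.2 hp hq (by omega)
    exact ⟨hp, hq, (stdz_lt_iff' hp hq hpq).1 hv, hd0, hdk⟩
  · rintro ⟨hp, hq, hv, hd0, hdk⟩
    have hpq : pq.1 < pq.2 := hcm pq.1 pq.2 hp hq (by omega)
    exact ⟨hp, hq, (stdz_lt_iff' hp hq hpq).2 hv, hd0, hdk⟩

lemma stdz_invK (hcm : CMono n c) : invK k n (stdz n u) c = invK k n u c := by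
  unfold invK
  rw [stdz_InvK hcm]

lemma stdz_ribbon (hk : 0 < k) (hcm : CMono n c) (hu : IsRibbonWord k n u c) :
    IsRibbonWord k n (stdz n u) c := by
  intro p hp1 hpn hcp
  have hp : p ∈ Set.Icc 1 n := ⟨hp1, by omega⟩
  have hp' : p + 1 ∈ Set.Icc 1 n := ⟨by omega, hpn⟩
  obtain ⟨⟨h1, hh1, hch, hwh1, hwh2⟩, ⟨j1, hj1, hcj, hwj1, hwj2⟩⟩ := hu p hp1 hpn hcp
  have hk' : (0:ℤ) < (k:ℤ) := by exact_mod_cast hk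
  have hh1p : h1 < p := hcm h1 p hh1 hp (by omega)
  have hh1p' : h1 < p + 1 := by omega
  have hpj1 : p < j1 := hcm p j1 hp hj1 (by omega)
  have hpj1' : p + 1 ≠ j1 := by
    intro hcon
    rw [← hcon] at hcj
    omega
  constructor
  · refine ⟨h1, hh1, hch, ?_, ?_⟩
    · exact (stdz_lt_iff' hh1 hp hh1p).2 hwh1
    · refine le_of_lt ((stdz_lt_iff hh1 hp').2 ?_)
      omega
  · refine ⟨j1, hj1, hcj, ?_, ?_⟩
    · refine le_of_lt ((stdz_lt_iff hp hj1).2 ?_)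
      omega
    · rcases Nat.lt_or_ge j1 (p + 1) with hlt | hge
      · exact (stdz_lt_iff hj1 hp').2 (by omega)
      · have : p + 1 < j1 := by omega
        exact (stdz_lt_iff' hp' hj1 this).2 hwj2

/-- Extension of a function on `Fin n` to `ℕ`. -/
def fext (n : ℕ) (f : Fin n → ℕ) : ℕ → ℕ := fun a => if h : a < n then f ⟨a, h⟩ else 0

/-- Destandardization of a standard word along `g`. -/
noncomputable def dstd (n : ℕ) (w : ℕ → ℕ) (g : ℕ → ℕ) : ℕ → ℕ := fun p =>
  if p ∈ Set.Icc 1 n then g (w p - 1) + 1 else 0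

/-- Compatibility of `f` with the descent signature of `w`. -/
def Compat (n : ℕ) (w : ℕ → ℕ) (f : Fin n → ℕ) : Prop :=
  ∀ (j : ℕ) (hj : j < n), 1 ≤ j → f ⟨j - 1, by omega⟩ = f ⟨j, hj⟩ → wordSgn n w j = 1

lemma leftOf_of_sgn {w : ℕ → ℕ} {j : ℕ} (h : wordSgn n w j = 1) :
    leftOf n w j (j + 1) := by
  by_cases hl : leftOf n w j (j + 1)
  · exact hl
  · rw [wordSgn, if_neg hl] at h
    omega

variable {w : ℕ → ℕ} {f : Fin n → ℕ}

lemma pw_step {j : ℕ} (hw : IsStdWord n w) (hsgn : wordSgn n w j = 1) :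
    pw n w j < pw n w (j + 1) := by
  obtain ⟨p', q', hp', hq', hlt, hwp, hwq⟩ := leftOf_of_sgn hsgn
  rw [← hwq, ← hwp, pw_w hw hp', pw_w hw hq']
  exact hlt

lemma pw_chain_aux (hw : IsStdWord n w) {a b : ℕ}
    (hstep : ∀ j, a ≤ j → j < b → pw n w j < pw n w (j + 1)) (hab : a < b) :
    pw n w a < pw n w b := by
  obtain ⟨d, rfl⟩ : ∃ d, b = a + 1 + d := ⟨b - a - 1, by omega⟩
  clear hab
  induction d with
  | zero => exact hstep a le_rfl (by omega)
  | succ d ih =>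
    refine lt_trans (ih (fun j hj1 hj2 => hstep j hj1 (by omega))) ?_
    exact hstep (a + 1 + d) (by omega) (by omega)

lemma pw_chain (hw : IsStdWord n w) (hmono : Monotone f) (hcompat : Compat n w f)
    {a b : ℕ} (ha : 1 ≤ a) (hab : a < b) (hb : b ≤ n)
    (hflat : fext n f (a - 1) = fext n f (b - 1)) : pw n w a < pw n w b := by
  refine pw_chain_aux hw (fun j hj1 hj2 => ?_) hab
  have hjn : j < n := by omega
  have h1j : 1 ≤ j := by omega
  refine pw_step hw (hcompat j hjn h1j ?_)
  have e1 : fext n f (a - 1) = f ⟨a - 1, by omega⟩ := dif_pos (by omega)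
  have e2 : fext n f (b - 1) = f ⟨b - 1, by omega⟩ := dif_pos (by omega)
  rw [e1, e2] at hflat
  have l1 : f ⟨a - 1, by omega⟩ ≤ f ⟨j - 1, by omega⟩ :=
    hmono (by simp only [Fin.mk_le_mk]; omega)
  have l2 : f ⟨j - 1, by omega⟩ ≤ f ⟨j, hjn⟩ :=
    hmono (by simp only [Fin.mk_le_mk]; omega)
  have l3 : f ⟨j, hjn⟩ ≤ f ⟨b - 1, by omega⟩ :=
    hmono (by simp only [Fin.mk_le_mk]; omega)
  omega

lemma dstd_apply {g : ℕ → ℕ} {p : ℕ} (hp : p ∈ Set.Icc 1 n) :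
    dstd n w g p = g (w p - 1) + 1 := if_pos hp

lemma dstd_isPos (g : ℕ → ℕ) : IsPosWord n (dstd n w g) :=
  ⟨fun p hp => by rw [dstd_apply hp]; omega, fun p hp => if_neg hp⟩

/-- Key comparison: destandardization inverts exactly where the standard word does. -/
lemma dstd_lt_iff (hw : IsStdWord n w) (hmono : Monotone f) (hcompat : Compat n w f)
    {p q : ℕ} (hp : p ∈ Set.Icc 1 n) (hq : q ∈ Set.Icc 1 n) (hpq : p < q) :
    dstd n w (fext n f) q < dstd n w (fext n f) p ↔ w q < w p := by
  have hbp : 1 ≤ w p ∧ w p ≤ n := hw.1.mapsTo hp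
  have hbq : 1 ≤ w q ∧ w q ≤ n := hw.1.mapsTo hq
  have hne : w p ≠ w q := fun hcon => by
    have := hw.1.2.1 hp hq hcon
    omega
  rw [dstd_apply hp, dstd_apply hq]
  have e1 : fext n f (w p - 1) = f ⟨w p - 1, by omega⟩ := dif_pos (by omega)
  have e2 : fext n f (w q - 1) = f ⟨w q - 1, by omega⟩ := dif_pos (by omega)
  constructor
  · intro h
    by_contra hcon
    have hlt : w p < w q := by omega
    have hmle : f ⟨w p - 1, by omega⟩ ≤ f ⟨w q - 1, by omega⟩ :=
      hmono (by simp only [Fin.mk_le_mk]; omega)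
    omega
  · intro h
    have hle : f ⟨w q - 1, by omega⟩ ≤ f ⟨w p - 1, by omega⟩ :=
      hmono (by simp only [Fin.mk_le_mk]; omega)
    rcases eq_or_lt_of_le hle with heq | hlt
    · exfalso
      have hchain : pw n w (w q) < pw n w (w p) := by
        refine pw_chain hw hmono hcompat (by omega) h (by omega) ?_
        rw [e1, e2, heq]
      rw [pw_w hw hq, pw_w hw hp] at hchain
      omega
    · omega

lemma dstd_DesK (hk : 0 < k) (hcm : CMono n c) (hw : IsStdWord n w)
    (hmono : Monotone f) (hcompat : Compat n w f) :
    DesK k n (dstd n w (fext n f)) c = DesK k n w c := by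
  ext pq
  constructor
  · rintro ⟨hp, hq, hv, hd⟩
    have hpq : pq.1 < pq.2 := hcm pq.1 pq.2 hp hq (by omega)
    exact ⟨hp, hq, (dstd_lt_iff hw hmono hcompat hp hq hpq).1 hv, hd⟩
  · rintro ⟨hp, hq, hv, hd⟩
    have hpq : pq.1 < pq.2 := hcm pq.1 pq.2 hp hq (by omega)
    exact ⟨hp, hq, (dstd_lt_iff hw hmono hcompat hp hq hpq).2 hv, hd⟩

lemma dstd_InvK (hcm : CMono n c) (hw : IsStdWord n w)
    (hmono : Monotone f) (hcompat : Compat n w f) :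
    InvK k n (dstd n w (fext n f)) c = InvK k n w c := by
  ext pq
  constructor
  · rintro ⟨hp, hq, hv, hd0, hdk⟩
    have hpq : pq.1 < pq.2 := hcm pq.1 pq.2 hp hq (by omega)
    exact ⟨hp, hq, (dstd_lt_iff hw hmono hcompat hp hq hpq).1 hv, hd0, hdk⟩
  · rintro ⟨hp, hq, hv, hd0, hdk⟩
    have hpq : pq.1 < pq.2 := hcm pq.1 pq.2 hp hq (by omega)
    exact ⟨hp, hq, (dstd_lt_iff hw hmono hcompat hp hq hpq).2 hv, hd0, hdk⟩

lemma dstd_invK (hcm : CMono n c) (hw : IsStdWord n w)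
    (hmono : Monotone f) (hcompat : Compat n w f) :
    invK k n (dstd n w (fext n f)) c = invK k n w c := by
  unfold invK
  rw [dstd_InvK hcm hw hmono hcompat]

lemma dstd_ribbon (hk : 0 < k) (hcm : CMono n c) (hw : IsStdWord n w)
    (hmono : Monotone f) (hcompat : Compat n w f) (hrib : IsRibbonWord k n w c) :
    IsRibbonWord k n (dstd n w (fext n f)) c := by
  intro p hp1 hpn hcp
  have hp : p ∈ Set.Icc 1 n := ⟨hp1, by omega⟩
  have hp' : p + 1 ∈ Set.Icc 1 n := ⟨by omega, hpn⟩
  obtain ⟨⟨h1, hh1, hch, hwh1, hwh2⟩, ⟨j1, hj1, hcj, hwj1, hwj2⟩⟩ := hrib p hp1 hpn hcp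
  have hk' : (0:ℤ) < (k:ℤ) := by exact_mod_cast hk
  have hh1p : h1 < p := hcm h1 p hh1 hp (by omega)
  have hpj1 : p < j1 := hcm p j1 hp hj1 (by omega)
  have hp1j1 : p + 1 < j1 := by
    rcases Nat.lt_trichotomy (p + 1) j1 with h | h | h
    · exact h
    · exfalso; rw [← h] at hcj; omega
    · exfalso
      have := hcm j1 (p + 1) hj1 hp' (by omega)
      omega
  constructor
  · refine ⟨h1, hh1, hch, ?_, ?_⟩
    · exact (dstd_lt_iff hw hmono hcompat hh1 hp hh1p).2 hwh1
    · have hlt : w h1 < w (p + 1) := by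
        rcases eq_or_lt_of_le hwh2 with heq | hlt
        · exact absurd (hw.1.2.1 hh1 hp' heq) (by omega)
        · exact hlt
      by_contra hcon
      have hx := (dstd_lt_iff hw hmono hcompat hh1 hp' (by omega)).1 (by omega)
      omega
  · refine ⟨j1, hj1, hcj, ?_, ?_⟩
    · have hplt : w p < w j1 := by
        rcases eq_or_lt_of_le hwj1 with heq | hlt
        · exact absurd (hw.1.2.1 hp hj1 heq) (by omega)
        · exact hlt
      by_contra hcon
      have hx := (dstd_lt_iff hw hmono hcompat hp hj1 hpj1).1 (by omega)
      omega
    · rw [dstd_apply hp', dstd_apply hj1]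
      have hbp : 1 ≤ w (p + 1) ∧ w (p + 1) ≤ n := hw.1.mapsTo hp'
      have hbj : 1 ≤ w j1 ∧ w j1 ≤ n := hw.1.mapsTo hj1
      have e1 : fext n f (w j1 - 1) = f ⟨w j1 - 1, by omega⟩ := dif_pos (by omega)
      have e2 : fext n f (w (p + 1) - 1) = f ⟨w (p + 1) - 1, by omega⟩ :=
        dif_pos (by omega)
      have hle : f ⟨w j1 - 1, by omega⟩ ≤ f ⟨w (p + 1) - 1, by omega⟩ :=
        hmono (by simp only [Fin.mk_le_mk]; omega)
      rcases eq_or_lt_of_le hle with heq | hlt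
      · exfalso
        have hchain : pw n w (w j1) < pw n w (w (p + 1)) := by
          refine pw_chain hw hmono hcompat (by omega) hwj2 (by omega) ?_
          rw [e1, e2, heq]
        rw [pw_w hw hj1, pw_w hw hp'] at hchain
        omega
      · omega

end StdzPres
end St16
namespace St16
open Set

section Fiber

variable {k n : ℕ} {u w : ℕ → ℕ} {c : ℕ → ℤ} {f : Fin n → ℕ}

lemma dstd_stdz (hw : IsStdWord n w) (hmono : Monotone f) (hcompat : Compat n w f) :
    stdz n (dstd n w (fext n f)) = w := by
  funext p
  by_cases hp : p ∈ Set.Icc 1 n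
  · rw [stdz_apply hp]
    have hbp : 1 ≤ w p ∧ w p ≤ n := hw.1.mapsTo hp
    have hfeq : (Finset.Icc 1 n).filter (fun q => dstd n w (fext n f) q <
          dstd n w (fext n f) p ∨ (dstd n w (fext n f) q = dstd n w (fext n f) p ∧ q ≤ p))
        = (Finset.Icc 1 n).filter (fun q => w q ≤ w p) := by
      apply Finset.filter_congr
      intro q hq
      have hq' : q ∈ Set.Icc 1 n := Finset.mem_Icc.1 hq
      have hbq : 1 ≤ w q ∧ w q ≤ n := hw.1.mapsTo hq'
      rcases Nat.lt_trichotomy q p with hlt | heq | hgt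
      · have hiff := dstd_lt_iff hw hmono hcompat hq' hp hlt
        have hne : w q ≠ w p := fun hc => by have := hw.1.2.1 hq' hp hc; omega
        constructor
        · intro hcase
          by_contra hcon
          exact absurd (hiff.2 (by omega)) (by omega)
        · intro hcase
          have : ¬ (dstd n w (fext n f) p < dstd n w (fext n f) q) := fun hcon =>
            absurd (hiff.1 hcon) (by omega)
          omega
      · subst heq
        exact ⟨fun _ => le_rfl, fun _ => Or.inr ⟨rfl, le_rfl⟩⟩
      · have hiff := dstd_lt_iff hw hmono hcompat hp hq' hgt
        have hne : w q ≠ w p := fun hc => by have := hw.1.2.1 hq' hp hc; omega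
        constructor
        · intro hcase
          have hqp : dstd n w (fext n f) q < dstd n w (fext n f) p := by omega
          have := hiff.1 hqp
          omega
        · intro hcase
          exact Or.inl (hiff.2 (by omega))
    rw [hfeq]
    have hcard : ((Finset.Icc 1 n).filter (fun q => w q ≤ w p)).card
        = (Finset.Icc 1 (w p)).card := by
      apply Finset.card_bij (fun q _ => w q)
      · intro a ha
        simp only [Finset.mem_filter, Finset.mem_Icc] at ha ⊢
        have hba : 1 ≤ w a ∧ w a ≤ n := hw.1.mapsTo (Set.mem_Icc.2 ha.1)
        exact ⟨hba.1, ha.2⟩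
      · intro a ha b hb hab
        simp only [Finset.mem_filter, Finset.mem_Icc] at ha hb
        exact hw.1.2.1 (Set.mem_Icc.2 ha.1) (Set.mem_Icc.2 hb.1) hab
      · intro b hb
        simp only [Finset.mem_Icc] at hb
        have hbmem : b ∈ Set.Icc 1 n := ⟨hb.1, le_trans hb.2 hbp.2⟩
        have hm := pw_mem hw hbmem
        refine ⟨pw n w b, ?_, pw_apply hw hbmem⟩
        simp only [Finset.mem_filter, Finset.mem_Icc]
        refine ⟨⟨hm.1, hm.2⟩, ?_⟩
        rw [pw_apply hw hbmem]
        exact hb.2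
    rw [hcard, Nat.card_Icc]
    omega
  · rw [show stdz n (dstd n w (fext n f)) p = 0 from if_neg hp, hw.2 p hp]

/-- The sorted value sequence of a positive word. -/
noncomputable def fOf (n : ℕ) (u : ℕ → ℕ) : Fin n → ℕ := fun m =>
  u (pw n (stdz n u) ((m : ℕ) + 1)) - 1

lemma fOf_monotone : Monotone (fOf n u) := by
  intro m m' hmm
  rcases eq_or_lt_of_le hmm with rfl | hlt
  · exact le_rfl
  · have hstd := stdz_isStd n u
    have hm1 : ((m : ℕ) + 1) ∈ Set.Icc 1 n := ⟨by omega, m.isLt⟩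
    have hm1' : ((m' : ℕ) + 1) ∈ Set.Icc 1 n := ⟨by omega, m'.isLt⟩
    have hp1 := pw_mem hstd hm1
    have hp2 := pw_mem hstd hm1'
    have ha1 : stdz n u (pw n (stdz n u) ((m : ℕ) + 1)) = (m : ℕ) + 1 := pw_apply hstd hm1
    have ha2 : stdz n u (pw n (stdz n u) ((m' : ℕ) + 1)) = (m' : ℕ) + 1 := pw_apply hstd hm1'
    have hml : (m : ℕ) < (m' : ℕ) := hlt
    unfold fOf
    set p1 := pw n (stdz n u) ((m : ℕ) + 1)
    set p2 := pw n (stdz n u) ((m' : ℕ) + 1)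
    by_contra hcon
    have huv : u p2 < u p1 := by omega
    have hs : stdz n u p2 < stdz n u p1 := by
      rcases Nat.lt_trichotomy p1 p2 with h | h | h
      · exact (stdz_lt_iff' hp1 hp2 h).2 huv
      · exfalso; rw [h] at huv; omega
      · exact (stdz_lt_iff hp2 hp1).2 (Or.inl huv)
    omega

lemma fOf_compat (hu : IsPosWord n u) : Compat n (stdz n u) (fOf n u) := by
  intro j hj h1j heq
  have hstd := stdz_isStd n u
  have hjm : j ∈ Set.Icc 1 n := ⟨h1j, by omega⟩
  have hjm' : j + 1 ∈ Set.Icc 1 n := ⟨by omega, hj⟩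
  have hp1 := pw_mem hstd hjm
  have hp2 := pw_mem hstd hjm'
  have ha1 : stdz n u (pw n (stdz n u) j) = j := pw_apply hstd hjm
  have ha2 : stdz n u (pw n (stdz n u) (j + 1)) = j + 1 := pw_apply hstd hjm'
  have hval : u (pw n (stdz n u) j) = u (pw n (stdz n u) (j + 1)) := by
    have ej : j - 1 + 1 = j := by omega
    have e1 : fOf n u ⟨j - 1, by omega⟩ = u (pw n (stdz n u) j) - 1 := by
      show u (pw n (stdz n u) (j - 1 + 1)) - 1 = _
      rw [ej]
    have e2 : fOf n u ⟨j, hj⟩ = u (pw n (stdz n u) (j + 1)) - 1 := rfl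
    rw [e1, e2] at heq
    have hu1 := hu.1 _ hp1
    have hu2 := hu.1 _ hp2
    omega
  have hplt : pw n (stdz n u) j < pw n (stdz n u) (j + 1) := by
    rcases Nat.lt_trichotomy (pw n (stdz n u) j) (pw n (stdz n u) (j + 1)) with h | h | h
    · exact h
    · exfalso; rw [h] at ha1; omega
    · exfalso
      have := (stdz_lt_iff hp2 hp1).2 (Or.inr ⟨hval.symm, h⟩)
      omega
  rw [wordSgn, if_pos ⟨pw n (stdz n u) j, pw n (stdz n u) (j + 1), hp1, hp2, hplt,
    pw_apply hstd hjm, pw_apply hstd hjm'⟩]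

lemma dstd_fOf (hu : IsPosWord n u) :
    dstd n (stdz n u) (fext n (fOf n u)) = u := by
  funext p
  by_cases hp : p ∈ Set.Icc 1 n
  · rw [dstd_apply hp]
    have hs1 : 1 ≤ stdz n u p := stdz_pos hp
    have hs2 : stdz n u p ≤ n := stdz_le hp
    have e1 : fext n (fOf n u) (stdz n u p - 1) = fOf n u ⟨stdz n u p - 1, by omega⟩ :=
      dif_pos (by omega)
    rw [e1]
    unfold fOf
    have e2 : (stdz n u p - 1) + 1 = stdz n u p := by omega
    simp only [e2]
    rw [pw_w (stdz_isStd n u) hp]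
    have := hu.1 p hp
    omega
  · rw [show dstd n (stdz n u) (fext n (fOf n u)) p = 0 from if_neg hp, hu.2 p hp]

lemma dstd_weight (hw : IsStdWord n w) (f : Fin n → ℕ) :
    wordWeight n (dstd n w (fext n f)) = ∑ m : Fin n, Finsupp.single (f m) 1 := by
  unfold wordWeight
  have hrhs : ∑ m : Fin n, Finsupp.single (f m) 1
      = ∑ a ∈ Finset.range n, Finsupp.single (fext n f a) 1 := by
    rw [← Fin.sum_univ_eq_sum_range (fun a => Finsupp.single (fext n f a) 1) n]
    apply Finset.sum_congr rfl
    intro m _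
    simp [fext]
  rw [hrhs]
  refine Finset.sum_nbij' (fun p => w p - 1) (fun a => pw n w (a + 1)) ?_ ?_ ?_ ?_ ?_
  · intro p hp
    have hb : 1 ≤ w p ∧ w p ≤ n := hw.1.mapsTo (Finset.mem_Icc.1 hp)
    show w p - 1 ∈ Finset.range n
    exact Finset.mem_range.2 (by omega)
  · intro a ha
    have hm := pw_mem hw ⟨by omega, Finset.mem_range.1 ha⟩
    exact Finset.mem_Icc.2 hm
  · intro p hp
    have hp' : p ∈ Set.Icc 1 n := Finset.mem_Icc.1 hp
    have hb : 1 ≤ w p ∧ w p ≤ n := hw.1.mapsTo hp'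
    have e2 : (w p - 1) + 1 = w p := by omega
    show pw n w ((w p - 1) + 1) = p
    rw [e2, pw_w hw hp']
  · intro a ha
    show w (pw n w (a + 1)) - 1 = a
    rw [pw_apply hw ⟨by omega, Finset.mem_range.1 ha⟩]
    omega
  · intro p hp
    have hp' : p ∈ Set.Icc 1 n := Finset.mem_Icc.1 hp
    rw [dstd_apply hp']
    simp

end Fiber
end St16
namespace St16
open Set

section Part2

variable {k n : ℕ} {u w : ℕ → ℕ} {c : ℕ → ℤ} {D : Set (ℕ × ℕ)} {f : Fin n → ℕ}

lemma dstd_extract (hw : IsStdWord n w) (f : Fin n → ℕ) (m : Fin n) :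
    dstd n w (fext n f) (pw n w ((m : ℕ) + 1)) = f m + 1 := by
  have hm : (m : ℕ) + 1 ∈ Set.Icc 1 n := ⟨by omega, m.isLt⟩
  rw [dstd_apply (pw_mem hw hm), pw_apply hw hm]
  congr 1
  show fext n f ((m : ℕ) + 1 - 1) = f m
  have hmm : (m : ℕ) + 1 - 1 = (m : ℕ) := by omega
  rw [hmm]
  simp [fext]

/-- The set of weakly increasing `σ`-compatible sequences with weight `d`. -/
def Fset (n : ℕ) (s : ℕ → ℤ) (d : ℕ →₀ ℕ) : Set (Fin n → ℕ) :=
  {f : Fin n → ℕ | Monotone f ∧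
    (∀ (j : ℕ) (hj : j < n), 1 ≤ j → f ⟨j - 1, by omega⟩ = f ⟨j, hj⟩ → s j = 1) ∧
    ∑ k : Fin n, Finsupp.single (f k) 1 = d}

lemma Qfun_apply (R : Type) [CommRing R] (n : ℕ) (s : ℕ → ℤ) (d : ℕ →₀ ℕ) :
    Qfun R n s d = ((Fset n s d).ncard : R) := rfl

lemma Fset_finite (n : ℕ) (s : ℕ → ℤ) (d : ℕ →₀ ℕ) : Finite ↥(Fset n s d) := by
  refine Finite.of_injective (fun f : ↥(Fset n s d) =>
    (fun m => (⟨f.1 m, ?_⟩ : {a // a ∈ d.support}) : Fin n → {a // a ∈ d.support})) ?_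
  · have hsum := f.2.2.2
    rw [Finsupp.mem_support_iff]
    have happ := DFunLike.congr_fun hsum (f.1 m)
    rw [Finsupp.finset_sum_apply] at happ
    have hge : (Finsupp.single (f.1 m) 1 : ℕ →₀ ℕ) (f.1 m)
        ≤ ∑ m' : Fin n, (Finsupp.single (f.1 m') 1 : ℕ →₀ ℕ) (f.1 m) :=
      Finset.single_le_sum
        (f := fun m' : Fin n => (Finsupp.single (f.1 m') 1 : ℕ →₀ ℕ) (f.1 m))
        (fun _ _ => Nat.zero_le _) (Finset.mem_univ m)
    rw [Finsupp.single_eq_same] at hge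
    omega
  · intro a b hab
    apply Subtype.ext
    funext m
    exact congrArg Subtype.val (congrFun hab m)

lemma part2 (hk : 0 < k) (S : Fin k → Finset (ℕ × ℕ)) (hS : ∀ i, IsSkewShape (S i))
    {e : ℕ → Fin k × ℕ × ℕ} (he : IsCellEnum k n S e)
    (hc : ∀ p ∈ Set.Icc 1 n, c p = shiftedContent k (e p))
    (hD : ∀ T : Fin k → ℕ × ℕ → ℕ, SemistdTuple S T →
      DesK k n (readWord n e T) c = D) :
    LLTpoly k S = ∑ᶠ w : lltV k n c D,
      ((Polynomial.X : Polynomial ℤ) ^ invK k n w.1 c) •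
        Qfun (Polynomial ℤ) n (wordSgn n w.1) := by
  classical
  have hcm : CMono n c := fun p q hp hq h => lt_of_c_lt he hc hp hq h
  rw [part1 hk hS he hc hD]
  funext d
  haveI : Fintype (lltV k n c D) := Fintype.ofFinite _
  haveI hFin : ∀ w : lltV k n c D, Fintype ↥(Fset n (wordSgn n w.1) d) :=
    fun w => @Fintype.ofFinite _ (Fset_finite n (wordSgn n w.1) d)
  set B := {u : ℕ → ℕ // IsPosWord n u ∧ IsRibbonWord k n u c ∧ DesK k n u c = D ∧
    wordWeight n u = d} with hB
  let G : (Σ w : lltV k n c D, ↥(Fset n (wordSgn n w.1) d)) → B := fun x =>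
    ⟨dstd n x.1.1 (fext n x.2.1),
      dstd_isPos _,
      dstd_ribbon hk hcm x.1.2.1 x.2.2.1 x.2.2.2.1 x.1.2.2.1,
      by rw [dstd_DesK hk hcm x.1.2.1 x.2.2.1 x.2.2.2.1]; exact x.1.2.2.2,
      by rw [dstd_weight x.1.2.1 x.2.1]; exact x.2.2.2.2⟩
  have hGbij : Function.Bijective G := by
    constructor
    · rintro ⟨⟨w1, hw1⟩, ⟨f1, hf1⟩⟩ ⟨⟨w2, hw2⟩, ⟨f2, hf2⟩⟩ h
      have hu : dstd n w1 (fext n f1) = dstd n w2 (fext n f2) :=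
        congrArg Subtype.val h
      have hww : w1 = w2 := by
        rw [← dstd_stdz hw1.1 hf1.1 hf1.2.1, hu, dstd_stdz hw2.1 hf2.1 hf2.2.1]
      subst hww
      have hff : f1 = f2 := by
        funext m
        have h1 := congrFun hu (pw n w1 ((m : ℕ) + 1))
        rw [dstd_extract hw1.1 f1 m, dstd_extract hw1.1 f2 m] at h1
        omega
      subst hff
      rfl
    · rintro ⟨u, hu1, hu2, hu3, hu4⟩
      refine ⟨⟨⟨stdz n u, stdz_isStd n u, stdz_ribbon hk hcm hu2,
        by rw [stdz_DesK hk hcm]; exact hu3⟩,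
        ⟨fOf n u, fOf_monotone, fOf_compat hu1, ?_⟩⟩, ?_⟩
      · rw [← dstd_weight (stdz_isStd n u) (fOf n u), dstd_fOf hu1]
        exact hu4
      · exact Subtype.ext (dstd_fOf hu1)
  have hstep1 : (∑ᶠ x : Σ w : lltV k n c D, ↥(Fset n (wordSgn n w.1) d),
      (Polynomial.X : Polynomial ℤ) ^ invK k n x.1.1 c)
      = ∑ᶠ u : B, (Polynomial.X : Polynomial ℤ) ^ invK k n u.1 c := by
    refine finsum_eq_of_bijective G hGbij ?_
    intro x
    have hinv : invK k n (dstd n x.1.1 (fext n x.2.1)) c = invK k n x.1.1 c :=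
      dstd_invK hcm x.1.2.1 x.2.2.1 x.2.2.2.1
    show (Polynomial.X : Polynomial ℤ) ^ invK k n x.1.1 c
      = (Polynomial.X : Polynomial ℤ) ^ invK k n (dstd n x.1.1 (fext n x.2.1)) c
    rw [hinv]
  have hstep2 : (∑ᶠ x : Σ w : lltV k n c D, ↥(Fset n (wordSgn n w.1) d),
      (Polynomial.X : Polynomial ℤ) ^ invK k n x.1.1 c)
      = ∑ w : lltV k n c D, (Fintype.card ↥(Fset n (wordSgn n w.1) d) : Polynomial ℤ)
        * (Polynomial.X : Polynomial ℤ) ^ invK k n w.1 c := by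
    rw [finsum_eq_sum_of_fintype, ← Finset.univ_sigma_univ, Finset.sum_sigma]
    apply Finset.sum_congr rfl
    intro w _
    show (∑ _s : ↥(Fset n (wordSgn n w.1) d),
      (Polynomial.X : Polynomial ℤ) ^ invK k n w.1 c) = _
    rw [Finset.sum_const, Finset.card_univ, nsmul_eq_mul]
  have hLHS : ribbonWordGF k n c D d
      = ∑ w : lltV k n c D, (Fintype.card ↥(Fset n (wordSgn n w.1) d) : Polynomial ℤ)
        * (Polynomial.X : Polynomial ℤ) ^ invK k n w.1 c := by
    rw [← hstep2, hstep1]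
    rfl
  have hRHS : (∑ᶠ w : lltV k n c D,
      ((Polynomial.X : Polynomial ℤ) ^ invK k n w.1 c) •
        Qfun (Polynomial ℤ) n (wordSgn n w.1)) d
      = ∑ w : lltV k n c D, (Polynomial.X : Polynomial ℤ) ^ invK k n w.1 c
        * ((Fset n (wordSgn n w.1) d).ncard : Polynomial ℤ) := by
    rw [finsum_eq_sum_of_fintype]
    refine (Finset.sum_apply d _ _).trans ?_
    apply Finset.sum_congr rfl
    intro w _
    refine (Pi.smul_apply _ _ _).trans ?_
    rw [smul_eq_mul, Qfun_apply]
  rw [hLHS, hRHS]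
  apply Finset.sum_congr rfl
  intro w _
  rw [mul_comm]
  congr 2
  rw [← Nat.card_coe_set_eq, Nat.card_eq_fintype_card]

end Part2
end St16
/-- Let `μ` be a `k`-tuple of skew shapes with `n` cells in
total, with corresponding content vector `c` and `k`-descent set `D`.  Then
`G̃^(k)_μ(x;q) = Σ_((w,c) ∈ WRib_k(c,D)) q^(inv_k(w,c)) x^w
             = Σ q^(inv_k(w,c)) Q_(σ(w))(x)`,
the last sum over the standard `k`-ribbon words in `WRib_k(c,D)`. -/
theorem statement16 (k n : ℕ) (hk : 0 < k) (S : Fin k → Finset (ℕ × ℕ))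
    (hS : ∀ i, IsSkewShape (S i)) (hn : (∑ i, (S i).card) = n)
    (e : ℕ → Fin k × ℕ × ℕ) (he : IsCellEnum k n S e)
    (c : ℕ → ℤ) (hc : ∀ p ∈ Set.Icc 1 n, c p = shiftedContent k (e p))
    (D : Set (ℕ × ℕ))
    (hD : ∀ T : Fin k → ℕ × ℕ → ℕ, SemistdTuple S T → DesK k n (readWord n e T) c = D) :
    LLTpoly k S = ribbonWordGF k n c D ∧
    LLTpoly k S = ∑ᶠ w : lltV k n c D,
      ((Polynomial.X : Polynomial ℤ) ^ invK k n w.1 c) •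
        Qfun (Polynomial ℤ) n (wordSgn n w.1) := by
  exact ⟨St16.part1 hk hS he hc hD, St16.part2 hk S hS he hc hD⟩
end
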